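/- arXiv:1709.09329 — 6 statements merged into one kernel-verified Lean document; each statement's English description precedes it below -/
import Mathlib

section
/- Let J = {j_1 < … < j_p} ⊆ {1, …, m} with p ≥ 1 and r_j ≠ 0 for every j ∈ J. Define the p×p configuration matrix A(J) with entries a_{jj} = 1 and a_{jk} = (r_j^2 + r_k^2 − ρ_{jk}^2)/(2 r_j r_k) for j ≠ k, j, k ∈ J. Then 2^p · (∏_{j∈J} r_j^2) · det A(J) = (−1)^{p−1} B(0⋆J). -/
inductive CMIdx (m : ℕ) : Type
  | zero : CMIdx m
  | star : CMIdx m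
  | pt : Fin m → CMIdx m

/-- Entry of the Cayley–Menger matrix with squared radii `rsq` and squared distances `ρsq`. -/
def cmEnt {m : ℕ} (rsq : Fin m → ℝ) (ρsq : Fin m → Fin m → ℝ) : CMIdx m → CMIdx m → ℝ
  | CMIdx.zero, CMIdx.zero => 0
  | CMIdx.zero, _ => 1
  | _, CMIdx.zero => 1
  | CMIdx.star, CMIdx.star => 0
  | CMIdx.star, CMIdx.pt j => rsq j
  | CMIdx.pt j, CMIdx.star => rsq j
  | CMIdx.pt j, CMIdx.pt k => if j = k then 0 else ρsq j k

/-- Minor `B(rows ; cols)` of the Cayley–Menger matrix. -/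
noncomputable def cmMinor {m : ℕ} (rsq : Fin m → ℝ) (ρsq : Fin m → Fin m → ℝ)
    (rows cols : List (CMIdx m)) : ℝ :=
  if h : rows.length = cols.length then
    Matrix.det (Matrix.of fun i j : Fin rows.length =>
      cmEnt rsq ρsq (rows.get i) (cols.get (Fin.cast h j)))
  else 0

/-- For `J = {j_1 < … < j_p}` with all `r_{j} ≠ 0`, the configuration matrix `A(J)` with
`a_{jj} = 1`, `a_{jk} = (r_j² + r_k² − ρ_{jk}²)/(2 r_j r_k)` satisfies
`2^p ∏_{j∈J} r_j² · det A(J) = (−1)^{p−1} B(0⋆J)`. -/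
theorem cm_configuration_det (m p : ℕ) (hp : 1 ≤ p)
    (r : Fin m → ℝ) (ρ : Fin m → Fin m → ℝ) (hsym : ∀ i j, ρ i j = ρ j i)
    (J : Fin p → Fin m) (hJ : StrictMono J) (hr : ∀ i, r (J i) ≠ 0) :
    (2 : ℝ) ^ p * (∏ i, r (J i) ^ 2) *
      Matrix.det (Matrix.of fun i j : Fin p =>
        if i = j then (1 : ℝ)
        else (r (J i) ^ 2 + r (J j) ^ 2 - ρ (J i) (J j) ^ 2) / (2 * r (J i) * r (J j))) =
    (-1 : ℝ) ^ (p - 1) *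
      cmMinor (fun i => r i ^ 2) (fun i j => ρ i j ^ 2)
        (CMIdx.zero :: CMIdx.star :: List.ofFn fun i : Fin p => CMIdx.pt (J i))
        (CMIdx.zero :: CMIdx.star :: List.ofFn fun i : Fin p => CMIdx.pt (J i)) := by
  classical
  set rows : List (CMIdx m) :=
    CMIdx.zero :: CMIdx.star :: List.ofFn fun i : Fin p => CMIdx.pt (J i) with hrows
  have hlen : rows.length = 2 + p := by simp [hrows]; omega
  set f : CMIdx m → CMIdx m → ℝ := cmEnt (fun i => r i ^ 2) (fun i j => ρ i j ^ 2) with hf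
  set g : Fin 2 ⊕ Fin p → CMIdx m :=
    Sum.elim ![CMIdx.zero, CMIdx.star] (fun k => CMIdx.pt (J k)) with hg
  -- the big matrix over the sum type
  set N : Matrix (Fin 2 ⊕ Fin p) (Fin 2 ⊕ Fin p) ℝ :=
    Matrix.of fun x y => f (g x) (g y) with hN
  have hget : ∀ x : Fin 2 ⊕ Fin p,
      rows.get ((finCongr hlen).symm (finSumFinEquiv x)) = g x := by
    rintro (i | k)
    · fin_cases i <;> rfl
    · simp only [finSumFinEquiv_apply_right, hg, Sum.elim_inr]
      have : ((finCongr hlen).symm (Fin.natAdd 2 k) : Fin rows.length) =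
          ⟨k + 2, by omega⟩ := by
        ext; simp [Fin.natAdd]; omega
      rw [this]
      show rows.get ⟨k+2, _⟩ = CMIdx.pt (J k)
      simp [hrows, List.get_ofFn]
  have hminor : cmMinor (fun i => r i ^ 2) (fun i j => ρ i j ^ 2) rows rows = N.det := by
    rw [cmMinor, dif_pos rfl]
    rw [← Matrix.det_submatrix_equiv_self ((finCongr hlen).trans finSumFinEquiv.symm) N]
    congr 1
    ext i j
    simp only [Matrix.submatrix_apply, Matrix.of_apply, hN, Equiv.trans_apply]
    have h1 : ∀ i : Fin rows.length, g (finSumFinEquiv.symm (finCongr hlen i)) = rows.get i := by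
      intro i
      rw [← hget (finSumFinEquiv.symm (finCongr hlen i))]
      congr 1
      simp
    rw [h1 i, h1 j]
    simp [Fin.cast_refl]
    rfl
  -- block decomposition
  set C : Matrix (Fin 2) (Fin 2) ℝ := !![0, 1; 1, 0] with hC
  set E : Matrix (Fin 2) (Fin p) ℝ :=
    Matrix.of fun i j => if i = 0 then (1:ℝ) else r (J j) ^ 2 with hE
  set Et : Matrix (Fin p) (Fin 2) ℝ :=
    Matrix.of fun j i => if i = 0 then (1:ℝ) else r (J j) ^ 2 with hEt
  set G : Matrix (Fin p) (Fin p) ℝ :=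
    Matrix.of fun j k => if j = k then (0:ℝ) else ρ (J j) (J k) ^ 2 with hG
  have hJinj : Function.Injective J := hJ.injective
  have hNblocks : N = Matrix.fromBlocks C E Et G := by
    ext x y
    rcases x with i | j <;> rcases y with i' | k
    · fin_cases i <;> fin_cases i' <;> rfl
    · fin_cases i <;> simp [hN, hE, hf, hg, cmEnt]
    · fin_cases i' <;> simp [hN, hEt, hf, hg, cmEnt]
    · by_cases h : j = k
      · subst h; simp [hN, hG, hf, hg, cmEnt]
      · have : J j ≠ J k := fun hc => h (hJinj hc)
        simp [hN, hG, hf, hg, cmEnt, h, this]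
  set T : Matrix (Fin 2 ⊕ Fin p) (Fin 2 ⊕ Fin p) ℝ :=
    Matrix.fromBlocks 1 0
      (Matrix.of fun (j : Fin p) (i : Fin 2) => if i = 0 then -r (J j) ^ 2 else (-1:ℝ)) 1
      with hT
  set M : Matrix (Fin p) (Fin p) ℝ :=
    Matrix.of fun j k =>
      r (J j) ^ 2 + r (J k) ^ 2 - (if j = k then (0:ℝ) else ρ (J j) (J k) ^ 2) with hM
  have hLL : (Matrix.of fun (j : Fin p) (i : Fin 2) =>
      if i = 0 then -r (J j) ^ 2 else (-1:ℝ)) * C + Et = 0 := by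
    ext j i
    simp only [Matrix.add_apply, Matrix.mul_apply, Fin.sum_univ_two, Matrix.of_apply, hC, hEt,
      Matrix.zero_apply]
    fin_cases i <;> simp
  have hLR : (Matrix.of fun (j : Fin p) (i : Fin 2) =>
      if i = 0 then -r (J j) ^ 2 else (-1:ℝ)) * E + G = -M := by
    ext j k
    simp only [Matrix.add_apply, Matrix.mul_apply, Fin.sum_univ_two, Matrix.of_apply, hE, hG, hM,
      Matrix.neg_apply]
    simp only [if_pos rfl, Fin.one_eq_zero_iff, Nat.succ_ne_self, if_neg, ite_false,
      OfNat.ofNat_ne_zero, reduceIte]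
    ring
  have hTN : T * N = Matrix.fromBlocks C E 0 (-M) := by
    rw [hNblocks, hT, Matrix.fromBlocks_multiply]
    simp only [Matrix.one_mul, Matrix.zero_mul, Matrix.mul_one, add_zero, zero_add,
      Matrix.mul_zero]
    rw [hLL, hLR]
  have hdetT : T.det = 1 := by
    rw [hT, Matrix.det_fromBlocks_zero₁₂]
    simp
  have hdetN : N.det = C.det * (-M).det := by
    have := congrArg Matrix.det hTN
    rw [Matrix.det_mul, hdetT, one_mul, Matrix.det_fromBlocks_zero₂₁] at this
    exact this
  have hdetC : C.det = -1 := by simp [hC, Matrix.det_fin_two_of]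
  -- relate M to the configuration matrix A
  set A : Matrix (Fin p) (Fin p) ℝ :=
    Matrix.of fun i j : Fin p =>
      if i = j then (1 : ℝ)
      else (r (J i) ^ 2 + r (J j) ^ 2 - ρ (J i) (J j) ^ 2) / (2 * r (J i) * r (J j)) with hA
  have hMfact : M = (2:ℝ) • (Matrix.diagonal (fun j => r (J j)) * A *
      Matrix.diagonal (fun j => r (J j))) := by
    ext j k
    simp only [hM, Matrix.of_apply, Matrix.smul_apply, Matrix.diagonal_mul, Matrix.mul_diagonal,
      smul_eq_mul, hA]
    by_cases h : j = k
    · subst h; rw [if_pos rfl, if_pos rfl]; ring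
    · rw [if_neg h, if_neg h]
      field_simp [hr j, hr k]
  have hdetM : M.det = 2 ^ p * (∏ i, r (J i) ^ 2) * A.det := by
    rw [hMfact, Matrix.det_smul, Matrix.det_mul, Matrix.det_mul, Matrix.det_diagonal]
    have hprod : (∏ i, r (J i) ^ 2) = (∏ i, r (J i)) * ∏ i, r (J i) := by
      rw [← Finset.prod_mul_distrib]
      exact Finset.prod_congr rfl fun i _ => pow_two (r (J i))
    rw [hprod]
    simp only [Fintype.card_fin, smul_eq_mul]
    ring
  -- put it together
  have hsign : (-1 : ℝ) ^ (p - 1) * (-1 : ℝ) ^ p = -1 := by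
    rw [← pow_add]
    exact Odd.neg_one_pow ⟨p - 1, by omega⟩
  rw [hminor, hdetN, hdetC, Matrix.det_neg, Fintype.card_fin, hdetM]
  linear_combination (2 ^ p * (∏ i, r (J i) ^ 2) * A.det) * hsign
end

section
/- Points P_1, …, P_{n+1} ∈ ℝ^n lie in a common affine hyperplane of ℝ^n (equivalently, the family is affinely dependent) if and only if B(0 1 2 … n+1) = 0. -/
open Matrix

section Aux
variable {n : ℕ} (P : Fin (n + 1) → EuclideanSpace ℝ (Fin n))

private lemma cm_sum_apply (g : Fin (n+1) → ℝ) (j : Fin n) :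
    (∑ i, g i • P i) j = ∑ i, g i * P i j := by
  rw [WithLp.ofLp_sum, Finset.sum_apply]
  simp [PiLp.smul_apply, smul_eq_mul]

/-- matrix with rows `(1, P i)` -/
noncomputable def cmN : Matrix (Fin (n+1)) (Fin (n+1)) ℝ :=
  of fun i => Fin.cons 1 (fun j => P i j)

lemma cm_affine_iff :
    AffineIndependent ℝ P ↔ LinearIndependent ℝ (fun i => cmN P i) := by
  rw [affineIndependent_iff_of_fintype, Fintype.linearIndependent_iff]
  constructor
  · intro h g hg
    have h0 : ∑ i, g i = 0 := by
      have := congrFun hg 0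
      simpa [cmN, Finset.sum_apply] using this
    apply h g h0
    rw [Finset.univ.weightedVSub_eq_linear_combination h0]
    ext j
    rw [show ((0 : EuclideanSpace ℝ (Fin n)) j) = 0 from rfl, cm_sum_apply P g j]
    simpa [cmN, Finset.sum_apply] using congrFun hg j.succ
  · intro h w hw hvsub
    apply h w
    rw [Finset.univ.weightedVSub_eq_linear_combination hw] at hvsub
    funext k
    induction k using Fin.cases with
    | zero => simpa [cmN, Finset.sum_apply] using hw
    | succ j =>
      have := congrFun (congrArg WithLp.ofLp hvsub) j
      rw [cm_sum_apply P w j] at this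
      simpa [cmN, Finset.sum_apply] using this

lemma cm_affine_iff_det : AffineIndependent ℝ P ↔ (cmN P).det ≠ 0 := by
  rw [cm_affine_iff]
  change LinearIndependent ℝ (cmN P).row ↔ _
  rw [Matrix.linearIndependent_rows_iff_isUnit, Matrix.isUnit_iff_isUnit_det, isUnit_iff_ne_zero]

/-- left factor -/
noncomputable def cmV : Matrix (Fin 1 ⊕ Fin (n+1)) (Fin 1 ⊕ Fin (n+1)) ℝ :=
  fromBlocks 1 0 (of fun i _ => ‖P i‖ ^ 2) (cmN P)

/-- right factor -/
noncomputable def cmW : Matrix (Fin 1 ⊕ Fin (n+1)) (Fin 1 ⊕ Fin (n+1)) ℝ :=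
  fromBlocks 0 (of fun _ _ => 1)
    (of fun k _ => (Fin.cons 1 (fun _ => 0) : Fin (n+1) → ℝ) k)
    (of fun k j => (Fin.cons (‖P j‖ ^ 2) (fun l => -2 * P j l) : Fin (n+1) → ℝ) k)

lemma cmV_det : (cmV P).det = (cmN P).det := by
  rw [cmV, det_fromBlocks_zero₁₂, det_one, one_mul]

lemma cmW_det : (cmW P).det = -((-2 : ℝ) ^ n * (cmN P).det) := by
  classical
  set σ : Equiv.Perm (Fin 1 ⊕ Fin (n+1)) := Equiv.swap (Sum.inl 0) (Sum.inr 0) with hσ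
  have hperm := Matrix.det_permute σ (cmW P)
  have hsub : (cmW P).submatrix σ id =
      fromBlocks 1 (of fun _ j => ‖P j‖ ^ 2) 0
        (of fun k j => (Fin.cons 1 (fun l => -2 * P j l) : Fin (n+1) → ℝ) k) := by
    ext r c
    rcases r with r | r
    · have hr : r = 0 := Subsingleton.elim _ _
      subst hr
      rcases c with c | c
      · have hc : c = 0 := Subsingleton.elim _ _
        subst hc
        simp [cmW, hσ, Equiv.swap_apply_left]
      · simp [cmW, hσ, Equiv.swap_apply_left]
    · induction r using Fin.cases with
      | zero =>
        rcases c with c | c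
        · simp [cmW, hσ, Equiv.swap_apply_right]
        · simp [cmW, hσ, Equiv.swap_apply_right]
      | succ l =>
        have h1 : (Sum.inr l.succ : Fin 1 ⊕ Fin (n+1)) ≠ Sum.inl 0 := by simp
        have h2 : (Sum.inr l.succ : Fin 1 ⊕ Fin (n+1)) ≠ Sum.inr 0 := by
          simp [Fin.succ_ne_zero]
        rcases c with c | c
        · simp [cmW, hσ, Equiv.swap_apply_of_ne_of_ne h1 h2, Fin.cons_succ]
        · simp [cmW, hσ, Equiv.swap_apply_of_ne_of_ne h1 h2, Fin.cons_succ]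
  have hsign : (Equiv.Perm.sign σ : ℝ) = -1 := by
    simp [hσ, Equiv.Perm.sign_swap]
  rw [hsub] at hperm
  rw [det_fromBlocks_zero₂₁, det_one, one_mul] at hperm
  have hD : (det (of fun (k : Fin (n+1)) (j : Fin (n+1)) => (Fin.cons 1 (fun l => -2 * P j l) : Fin (n+1) → ℝ) k) : ℝ)
      = (-2 : ℝ) ^ n * (cmN P).det := by
    have : (of fun (k : Fin (n+1)) (j : Fin (n+1)) => (Fin.cons 1 (fun l => -2 * P j l) : Fin (n+1) → ℝ) k)
        = of fun k j => ((Fin.cons 1 (fun _ : Fin n => (-2 : ℝ)) : Fin (n+1) → ℝ) k) * (cmN P)ᵀ k j := by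
      ext k j
      induction k using Fin.cases with
      | zero => simp [cmN]
      | succ l => simp [cmN, Fin.cons_succ]
    rw [this, det_mul_column, det_transpose, Fin.prod_cons]
    simp
  rw [hD, hsign] at hperm
  linarith [hperm]

end Aux

section Main
variable {n : ℕ} (P : Fin (n + 1) → EuclideanSpace ℝ (Fin n))

/-- the inner Cayley–Menger matrix in block form -/
noncomputable def cmA : Matrix (Fin 1 ⊕ Fin (n+1)) (Fin 1 ⊕ Fin (n+1)) ℝ :=
  fromBlocks 0 (of fun _ _ => 1) (of fun _ _ => 1)
    (of fun i j => if i = j then 0 else ‖P i - P j‖ ^ 2)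

lemma cm_entry (i j : Fin (n+1)) :
    (if i = j then (0:ℝ) else ‖P i - P j‖ ^ 2)
      = ‖P i‖ ^ 2 + ‖P j‖ ^ 2 - 2 * ∑ l, P i l * P j l := by
  have hinner : ∀ x y : EuclideanSpace ℝ (Fin n),
      (inner ℝ x y : ℝ) = ∑ l, x l * y l := by
    intro x y
    simp [PiLp.inner_apply, mul_comm]
  by_cases h : i = j
  · subst h
    rw [if_pos rfl, ← hinner]
    rw [real_inner_self_eq_norm_sq]
    ring
  · rw [if_neg h, ← hinner, norm_sub_sq_real]
    ring

lemma cmA_eq : cmA P = cmV P * cmW P := by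
  ext r c
  rw [Matrix.mul_apply, Fintype.sum_sum_type]
  rcases r with r | r
  · have hr : r = 0 := Subsingleton.elim _ _
    subst hr
    rcases c with c | c
    · simp [cmA, cmV, cmW, Fin.sum_univ_succ, Matrix.one_apply]
    · simp [cmA, cmV, cmW, Fin.sum_univ_succ, Matrix.one_apply]
  rcases c with c | c
  · simp [cmA, cmV, cmW, cmN, Fin.sum_univ_succ]
  · rw [show cmA P (Sum.inr r) (Sum.inr c) = if r = c then (0:ℝ) else ‖P r - P c‖ ^ 2 from rfl,
      cm_entry]
    have hs : ∑ l, P r l * (-2 * P c l) = -(2 * ∑ l, P r l * P c l) := by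
      rw [Finset.mul_sum, ← Finset.sum_neg_distrib]
      exact Finset.sum_congr rfl fun l _ => by ring
    simp [cmV, cmW, cmN, Fin.sum_univ_succ, hs]
    have h2 : ∑ x, P r x * (2 * P c x) = 2 * ∑ x, P r x * P c x := by
      rw [Finset.mul_sum]
      exact Finset.sum_congr rfl fun l _ => by ring
    rw [h2]
    ring
end Main

def cmEquiv (n : ℕ) : Fin (n+2) ≃ (Fin 1 ⊕ Fin (n+1)) where
  toFun := Fin.cases (Sum.inl 0) Sum.inr
  invFun := Sum.elim (fun _ => 0) Fin.succ
  left_inv := by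
    intro x
    induction x using Fin.cases <;> simp
  right_inv := by
    rintro (x | x)
    · simp [Subsingleton.elim x 0]
    · simp

/-- `n+1` points of `ℝⁿ` lie in a common affine hyperplane (equivalently, are affinely
dependent) if and only if their Cayley–Menger determinant `B(0 1 2 … n+1)` vanishes. -/
theorem affine_dependent_iff_cayleyMenger_det_eq_zero
    (n : ℕ) (P : Fin (n + 1) → EuclideanSpace ℝ (Fin n)) :
    (¬ AffineIndependent ℝ P) ↔
      Matrix.det (Matrix.of
        (Matrix.vecCons (Matrix.vecCons (0 : ℝ) fun _ : Fin (n + 1) => (1 : ℝ))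
          (fun i => Matrix.vecCons (1 : ℝ)
            (fun j => if i = j then 0 else ‖P i - P j‖ ^ 2)))) = 0 := by
  have hM : (Matrix.of
        (Matrix.vecCons (Matrix.vecCons (0 : ℝ) fun _ : Fin (n + 1) => (1 : ℝ))
          (fun i => Matrix.vecCons (1 : ℝ)
            (fun j => if i = j then 0 else ‖P i - P j‖ ^ 2))))
      = (cmA P).submatrix (cmEquiv n) (cmEquiv n) := by
    ext r c
    induction r using Fin.cases with
    | zero =>
      induction c using Fin.cases with
      | zero => simp [cmA, cmEquiv]
      | succ j => simp [cmA, cmEquiv]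
    | succ i =>
      induction c using Fin.cases with
      | zero => simp [cmA, cmEquiv]
      | succ j => simp [cmA, cmEquiv]
  rw [hM, Matrix.det_submatrix_equiv_self, cmA_eq, det_mul, cmV_det, cmW_det,
    cm_affine_iff_det, not_not]
  constructor
  · intro h
    rw [h]
    ring
  · intro h
    rcases mul_eq_zero.1 h with h1 | h1
    · exact h1
    · have h2 := neg_eq_zero.1 h1
      rcases mul_eq_zero.1 h2 with h3 | h3
      · exact absurd h3 (pow_ne_zero _ (by norm_num))
      · exact h3
end

section
/- Fix distinct indices 1, 2 and a set K of further distinct indices, and regard the Cayley–Menger minors as functions of the variable t = ρ_{12}^2 (all other entries held fixed). Then: (i) d/dt B(0 1 K ; 0 2 K) = B(0 K); and (ii) d/dt B(0 1 2 K) = −2 B(0 1 K ; 0 2 K). -/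
open Matrix

section Aux

lemma updRow_comm {n α : Type*} [DecidableEq n] (A : Matrix n n α) {a b : n}
    (h : a ≠ b) (u v : n → α) :
    (A.updateRow a u).updateRow b v = (A.updateRow b v).updateRow a u := by
  ext p q
  rcases eq_or_ne p a with rfl | hpa
  · rw [Matrix.updateRow_ne h, Matrix.updateRow_self, Matrix.updateRow_self]
  · rcases eq_or_ne p b with rfl | hpb
    · rw [Matrix.updateRow_self, Matrix.updateRow_ne h.symm, Matrix.updateRow_self]
    · rw [Matrix.updateRow_ne hpb, Matrix.updateRow_ne hpa, Matrix.updateRow_ne hpa,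
        Matrix.updateRow_ne hpb]

lemma det_updRow_single {n : ℕ} (A : Matrix (Fin (n+1)) (Fin (n+1)) ℝ) (a b : Fin (n+1)) :
    (A.updateRow a (Pi.single b 1)).det
      = (-1 : ℝ) ^ ((a : ℕ) + (b : ℕ)) * (A.submatrix a.succAbove b.succAbove).det := by
  have hsub : ∀ v : Fin (n+1) → ℝ, ∀ c : Fin (n+1),
      (A.updateRow a v).submatrix a.succAbove c.succAbove
        = A.submatrix a.succAbove c.succAbove := by
    intro v c; ext p q
    simp [Matrix.submatrix_apply, Matrix.updateRow_ne (Fin.succAbove_ne a p)]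
  rw [Matrix.det_succ_row _ a]
  rw [Finset.sum_eq_single b]
  · rw [hsub, Matrix.updateRow_self, Pi.single_eq_same, mul_one]
  · intro c _ hc
    rw [Matrix.updateRow_self, Pi.single_eq_of_ne hc, mul_zero, zero_mul]
  · intro h; exact absurd (Finset.mem_univ b) h

lemma hasDerivAt_det_one {n : ℕ} (A : Matrix (Fin n) (Fin n) ℝ) (a b : Fin n) (t0 : ℝ) :
    HasDerivAt (fun t => (A.updateRow a (Function.update (A a) b t)).det)
      ((A.updateRow a (Pi.single b 1)).det) t0 := by
  have hrow : ∀ t : ℝ, Function.update (A a) b t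
      = Function.update (A a) b 0 + t • (Pi.single b 1 : Fin n → ℝ) := by
    intro t; funext q
    rcases eq_or_ne q b with rfl | hq
    · simp
    · simp [Function.update_of_ne hq, Pi.single_eq_of_ne hq]
  have key : (fun t : ℝ => (A.updateRow a (Function.update (A a) b t)).det)
      = fun t => (A.updateRow a (Function.update (A a) b 0)).det
          + t * (A.updateRow a (Pi.single b 1)).det := by
    funext t
    rw [hrow, Matrix.det_updateRow_add, Matrix.det_updateRow_smul]
  rw [key]
  simpa using ((hasDerivAt_id t0).mul_const
    ((A.updateRow a (Pi.single b 1)).det)).const_add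
    ((A.updateRow a (Function.update (A a) b 0)).det)

lemma hasDerivAt_det_two {n : ℕ} (A : Matrix (Fin n) (Fin n) ℝ) (a a' : Fin n)
    (hne : a ≠ a') (b b' : Fin n) (t0 : ℝ) :
    HasDerivAt (fun t => ((A.updateRow a (Function.update (A a) b t)).updateRow a'
        (Function.update (A a') b' t)).det)
      (((A.updateRow a (Pi.single b 1)).updateRow a'
          (Function.update (A a') b' t0)).det
        + ((A.updateRow a (Function.update (A a) b t0)).updateRow a'
          (Pi.single b' 1)).det) t0 := by
  set u0 : Fin n → ℝ := Function.update (A a) b 0 with hu0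
  set v0 : Fin n → ℝ := Function.update (A a') b' 0 with hv0
  set e : Fin n → ℝ := Pi.single b 1 with he
  set e' : Fin n → ℝ := Pi.single b' 1 with he'
  have hrowa : ∀ t : ℝ, Function.update (A a) b t = u0 + t • e := by
    intro t; funext q
    rcases eq_or_ne q b with rfl | hq
    · simp [hu0, he]
    · simp [hu0, he, Function.update_of_ne hq, Pi.single_eq_of_ne hq]
  have hrowa' : ∀ t : ℝ, Function.update (A a') b' t = v0 + t • e' := by
    intro t; funext q
    rcases eq_or_ne q b' with rfl | hq
    · simp [hv0, he']
    · simp [hv0, he', Function.update_of_ne hq, Pi.single_eq_of_ne hq]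
  set c00 : ℝ := ((A.updateRow a u0).updateRow a' v0).det with hc00
  set c01 : ℝ := ((A.updateRow a u0).updateRow a' e').det with hc01
  set c10 : ℝ := ((A.updateRow a e).updateRow a' v0).det with hc10
  set c11 : ℝ := ((A.updateRow a e).updateRow a' e').det with hc11
  have expand : ∀ (w : Fin n → ℝ) (t : ℝ),
      ((A.updateRow a (u0 + t • e)).updateRow a' w).det
        = ((A.updateRow a u0).updateRow a' w).det
          + t * ((A.updateRow a e).updateRow a' w).det := by
    intro w t
    calc ((A.updateRow a (u0 + t • e)).updateRow a' w).det
        = ((A.updateRow a' w).updateRow a (u0 + t • e)).det := by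
          rw [updRow_comm A hne (u0 + t • e) w]
      _ = ((A.updateRow a' w).updateRow a u0).det
            + t * ((A.updateRow a' w).updateRow a e).det := by
          rw [Matrix.det_updateRow_add, Matrix.det_updateRow_smul]
      _ = ((A.updateRow a u0).updateRow a' w).det
            + t * ((A.updateRow a e).updateRow a' w).det := by
          rw [updRow_comm A hne.symm w u0, updRow_comm A hne.symm w e]
  have key : (fun t : ℝ => ((A.updateRow a (Function.update (A a) b t)).updateRow a'
        (Function.update (A a') b' t)).det)
      = fun t => c00 + t * c01 + t * c10 + t * (t * c11) := by
    funext t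
    rw [hrowa, hrowa', Matrix.det_updateRow_add, Matrix.det_updateRow_smul,
      expand v0 t, expand e' t]
    ring
  have hD1 : ((A.updateRow a (Pi.single b 1)).updateRow a'
      (Function.update (A a') b' t0)).det = c10 + t0 * c11 := by
    rw [hrowa', Matrix.det_updateRow_add, Matrix.det_updateRow_smul]
  have hD2 : ((A.updateRow a (Function.update (A a) b t0)).updateRow a'
      (Pi.single b' 1)).det = c01 + t0 * c11 := by
    rw [hrowa t0, expand e' t0]
  rw [key, hD1, hD2]
  have h := ((((hasDerivAt_id t0).mul_const c01).const_add c00).add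
      ((hasDerivAt_id t0).mul_const c10)).add
      ((hasDerivAt_id t0).mul ((hasDerivAt_id t0).mul_const c11))
  simp only [id_eq, one_mul] at h
  convert h using 1
  · rfl
  · rfl
  · funext t; simp only [Pi.add_apply, Pi.mul_apply, id_eq]
  · ring

end Aux

/-- The squared-distance data with the entry at the symmetric positions `(i,j)`, `(j,i)`
replaced by the variable `t`. -/
def ρmod {m : ℕ} (ρsq : Fin m → Fin m → ℝ) (i j : Fin m) (t : ℝ) :
    Fin m → Fin m → ℝ :=
  fun a b => if (a = i ∧ b = j) ∨ (a = j ∧ b = i) then t else ρsq a b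

section Aux2

lemma cmEnt_symm {m : ℕ} (rsq : Fin m → ℝ) (ρ : Fin m → Fin m → ℝ)
    (h : ∀ a b, ρ a b = ρ b a) (x y : CMIdx m) :
    cmEnt rsq ρ x y = cmEnt rsq ρ y x := by
  cases x with
  | zero => cases y <;> rfl
  | star => cases y <;> rfl
  | pt a =>
    cases y with
    | zero => rfl
    | star => rfl
    | pt b =>
      show (if a = b then (0:ℝ) else ρ a b) = if b = a then 0 else ρ b a
      rcases eq_or_ne a b with rfl | hab
      · simp
      · rw [if_neg hab, if_neg hab.symm, h]

lemma ρmod_symm {m : ℕ} (ρ : Fin m → Fin m → ℝ) (h : ∀ a b, ρ a b = ρ b a)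
    (i j : Fin m) (t : ℝ) : ∀ a b, ρmod ρ i j t a b = ρmod ρ i j t b a := by
  intro a b
  unfold ρmod
  have hc : ((a = i ∧ b = j) ∨ (a = j ∧ b = i)) ↔ ((b = i ∧ a = j) ∨ (b = j ∧ a = i)) := by
    tauto
  by_cases hd : (a = i ∧ b = j) ∨ (a = j ∧ b = i)
  · rw [if_pos hd, if_pos (hc.mp hd)]
  · rw [if_neg hd, if_neg (fun hx => hd (hc.mpr hx)), h]

lemma cmEnt_ρmod_eq {m : ℕ} (rsq : Fin m → ℝ) (ρ : Fin m → Fin m → ℝ)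
    (i j : Fin m) (t : ℝ) (x y : CMIdx m)
    (h : ∀ a b : Fin m, x = CMIdx.pt a → y = CMIdx.pt b →
        ¬((a = i ∧ b = j) ∨ (a = j ∧ b = i))) :
    cmEnt rsq (ρmod ρ i j t) x y = cmEnt rsq ρ x y := by
  cases x with
  | zero => cases y <;> rfl
  | star => cases y <;> rfl
  | pt a =>
    cases y with
    | zero => rfl
    | star => rfl
    | pt b =>
      show (if a = b then (0:ℝ) else ρmod ρ i j t a b) = if a = b then 0 else ρ a b
      rcases eq_or_ne a b with rfl | hab
      · simp
      · rw [if_neg hab, if_neg hab, ρmod, if_neg (h a b rfl rfl)]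

lemma cmMinor_ofFn {m n : ℕ} (rsq : Fin m → ℝ) (ρ : Fin m → Fin m → ℝ)
    (R C : Fin n → CMIdx m) :
    cmMinor rsq ρ (List.ofFn R) (List.ofFn C)
      = (Matrix.of fun p q : Fin n => cmEnt rsq ρ (R p) (C q)).det := by
  rw [cmMinor, dif_pos (by simp)]
  rw [← Matrix.det_submatrix_equiv_self (finCongr (List.length_ofFn : (List.ofFn R).length = n).symm)]
  congr 1
  ext p q
  simp only [Matrix.submatrix_apply, Matrix.of_apply, List.get_ofFn]
  exact congrArg₂ (cmEnt rsq ρ) (congrArg R (Fin.ext rfl)) (congrArg C (Fin.ext rfl))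

end Aux2

/-- Derivatives of Cayley–Menger minors with respect to `t = ρ_{12}²` (identities (39)/(40)
of Aomoto–Machida): (i) `d/dt B(0 1 K ; 0 2 K) = B(0 K)` and
(ii) `d/dt B(0 1 2 K) = −2 B(0 1 K ; 0 2 K)`. -/
theorem cm_minor_deriv_in_rho (m : ℕ)
    (rsq : Fin m → ℝ) (ρsq : Fin m → Fin m → ℝ) (hsym : ∀ a b, ρsq a b = ρsq b a)
    (i j : Fin m) (hij : i ≠ j) (k : ℕ) (K : Fin k → Fin m)
    (hK : Function.Injective K) (hKi : ∀ t, K t ≠ i) (hKj : ∀ t, K t ≠ j) :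
    (∀ t0 : ℝ,
      HasDerivAt (fun t : ℝ =>
          cmMinor rsq (ρmod ρsq i j t)
            ([CMIdx.zero, CMIdx.pt i] ++ List.ofFn fun s => CMIdx.pt (K s))
            ([CMIdx.zero, CMIdx.pt j] ++ List.ofFn fun s => CMIdx.pt (K s)))
        (cmMinor rsq (ρmod ρsq i j t0)
          (CMIdx.zero :: List.ofFn fun s => CMIdx.pt (K s))
          (CMIdx.zero :: List.ofFn fun s => CMIdx.pt (K s))) t0) ∧
    (∀ t0 : ℝ,
      HasDerivAt (fun t : ℝ =>
          cmMinor rsq (ρmod ρsq i j t)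
            ([CMIdx.zero, CMIdx.pt i, CMIdx.pt j] ++ List.ofFn fun s => CMIdx.pt (K s))
            ([CMIdx.zero, CMIdx.pt i, CMIdx.pt j] ++ List.ofFn fun s => CMIdx.pt (K s)))
        (-2 * cmMinor rsq (ρmod ρsq i j t0)
          ([CMIdx.zero, CMIdx.pt i] ++ List.ofFn fun s => CMIdx.pt (K s))
          ([CMIdx.zero, CMIdx.pt j] ++ List.ofFn fun s => CMIdx.pt (K s))) t0) := by
  classical
  set g : Fin k → CMIdx m := fun s => CMIdx.pt (K s) with hg
  set R1 : Fin (k+1+1) → CMIdx m := Fin.cons CMIdx.zero (Fin.cons (CMIdx.pt i) g) with hR1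
  set C1 : Fin (k+1+1) → CMIdx m := Fin.cons CMIdx.zero (Fin.cons (CMIdx.pt j) g) with hC1
  set R0 : Fin (k+1) → CMIdx m := Fin.cons CMIdx.zero g with hR0
  set R2 : Fin (k+1+1+1) → CMIdx m :=
    Fin.cons CMIdx.zero (Fin.cons (CMIdx.pt i) (Fin.cons (CMIdx.pt j) g)) with hR2
  -- list identifications
  have hL1 : ([CMIdx.zero, CMIdx.pt i] ++ List.ofFn g) = List.ofFn R1 := by
    simp [hR1, List.ofFn_succ]
  have hL2 : ([CMIdx.zero, CMIdx.pt j] ++ List.ofFn g) = List.ofFn C1 := by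
    simp [hC1, List.ofFn_succ]
  have hL0 : (CMIdx.zero :: List.ofFn g) = List.ofFn R0 := by
    simp [hR0, List.ofFn_succ]
  have hL3 : ([CMIdx.zero, CMIdx.pt i, CMIdx.pt j] ++ List.ofFn g) = List.ofFn R2 := by
    simp [hR2, List.ofFn_succ]
  -- values at special indices
  have hR1one : R1 1 = CMIdx.pt i := by
    rw [← Fin.succ_zero_eq_one', hR1, Fin.cons_succ, Fin.cons_zero]
  have hC1one : C1 1 = CMIdx.pt j := by
    rw [← Fin.succ_zero_eq_one', hC1, Fin.cons_succ, Fin.cons_zero]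
  have hR2one : R2 1 = CMIdx.pt i := by
    rw [← Fin.succ_zero_eq_one', hR2, Fin.cons_succ, Fin.cons_zero]
  have hR2two : R2 2 = CMIdx.pt j := by
    rw [← Fin.succ_one_eq_two', ← Fin.succ_zero_eq_one', hR2, Fin.cons_succ, Fin.cons_succ,
      Fin.cons_zero]
  -- classification of non-special entries
  have clsV : ∀ (x : CMIdx m) (p : Fin (k+1+1)), p ≠ 1 → ∀ a : Fin m,
      (Fin.cons CMIdx.zero (Fin.cons x g) : ∀ _ : Fin (k+1+1), CMIdx m) p = CMIdx.pt a →
        a ≠ i ∧ a ≠ j := by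
    intro x p
    refine Fin.cases ?_ (fun s => ?_) p
    · intro _ a ha
      rw [Fin.cons_zero] at ha
      exact (by cases ha)
    · refine Fin.cases ?_ (fun r => ?_) s
      · intro hp
        exact absurd (Fin.succ_zero_eq_one') hp
      · intro _ a ha
        rw [Fin.cons_succ, Fin.cons_succ] at ha
        have : K r = a := by injection ha
        exact ⟨this ▸ hKi r, this ▸ hKj r⟩
  have cls1 : ∀ p : Fin (k+1+1), p ≠ 1 → ∀ a : Fin m, R1 p = CMIdx.pt a → a ≠ i ∧ a ≠ j := by
    rw [hR1]; exact clsV (CMIdx.pt i)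
  have cls1' : ∀ p : Fin (k+1+1), p ≠ 1 → ∀ a : Fin m, C1 p = CMIdx.pt a → a ≠ i ∧ a ≠ j := by
    rw [hC1]; exact clsV (CMIdx.pt j)
  have cls0 : ∀ p : Fin (k+1), ∀ a : Fin m, R0 p = CMIdx.pt a → a ≠ i ∧ a ≠ j := by
    intro p
    refine Fin.cases ?_ (fun s => ?_) p
    · intro a ha; rw [hR0, Fin.cons_zero] at ha; exact (by cases ha)
    · intro a ha
      rw [hR0, Fin.cons_succ] at ha
      have : K s = a := by injection ha
      exact ⟨this ▸ hKi s, this ▸ hKj s⟩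
  have cls2i : ∀ p : Fin (k+1+1+1), p ≠ 1 → ∀ a : Fin m, R2 p = CMIdx.pt a → a ≠ i := by
    intro p
    refine Fin.cases ?_ (fun s => ?_) p
    · intro _ a ha; rw [hR2, Fin.cons_zero] at ha; exact (by cases ha)
    · refine Fin.cases ?_ (fun r => ?_) s
      · intro hp; exact absurd (Fin.succ_zero_eq_one') hp
      · refine Fin.cases ?_ (fun w => ?_) r
        · intro _ a ha
          rw [hR2, Fin.cons_succ, Fin.cons_succ, Fin.cons_zero] at ha
          have : j = a := by injection ha
          exact this ▸ (Ne.symm hij)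
        · intro _ a ha
          rw [hR2, Fin.cons_succ, Fin.cons_succ, Fin.cons_succ] at ha
          have : K w = a := by injection ha
          exact this ▸ hKi w
  have cls2j : ∀ p : Fin (k+1+1+1), p ≠ 2 → ∀ a : Fin m, R2 p = CMIdx.pt a → a ≠ j := by
    intro p
    refine Fin.cases ?_ (fun s => ?_) p
    · intro _ a ha; rw [hR2, Fin.cons_zero] at ha; exact (by cases ha)
    · refine Fin.cases ?_ (fun r => ?_) s
      · intro _ a ha
        rw [hR2, Fin.cons_succ, Fin.cons_zero] at ha
        have : i = a := by injection ha
        exact this ▸ hij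
      · refine Fin.cases ?_ (fun w => ?_) r
        · intro hp
          rw [← Fin.succ_one_eq_two', ← Fin.succ_zero_eq_one'] at hp
          exact absurd rfl hp
        · intro _ a ha
          rw [hR2, Fin.cons_succ, Fin.cons_succ, Fin.cons_succ] at ha
          have : K w = a := by injection ha
          exact this ▸ hKj w
  -- converting mixed entries to unmodified entries
  have mkBoth : ∀ (t : ℝ) (x y : CMIdx m), (∀ a : Fin m, x = CMIdx.pt a → a ≠ i ∧ a ≠ j) →
      cmEnt rsq (ρmod ρsq i j t) x y = cmEnt rsq ρsq x y := by
    intro t x y hx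
    apply cmEnt_ρmod_eq
    intro a b ha _ hc
    rcases hc with ⟨hA, _⟩ | ⟨hA, _⟩
    · exact (hx a ha).1 hA
    · exact (hx a ha).2 hA
  have mki : ∀ (t : ℝ) (y : CMIdx m), (∀ b : Fin m, y = CMIdx.pt b → b ≠ j) →
      cmEnt rsq (ρmod ρsq i j t) (CMIdx.pt i) y = cmEnt rsq ρsq (CMIdx.pt i) y := by
    intro t y hy
    apply cmEnt_ρmod_eq
    intro a b ha hb hc
    have hai : i = a := by injection ha
    rcases hc with ⟨_, hB⟩ | ⟨hA, _⟩
    · exact hy b hb hB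
    · exact hij (hai ▸ hA)
  have mkj : ∀ (t : ℝ) (y : CMIdx m), (∀ b : Fin m, y = CMIdx.pt b → b ≠ i) →
      cmEnt rsq (ρmod ρsq i j t) (CMIdx.pt j) y = cmEnt rsq ρsq (CMIdx.pt j) y := by
    intro t y hy
    apply cmEnt_ρmod_eq
    intro a b ha hb hc
    have haj : j = a := by injection ha
    rcases hc with ⟨hA, _⟩ | ⟨_, hB⟩
    · exact hij (haj ▸ hA).symm
    · exact hy b hb hB
  -- the key special values
  have hEij : ∀ t : ℝ, cmEnt rsq (ρmod ρsq i j t) (CMIdx.pt i) (CMIdx.pt j) = t := by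
    intro t
    show (if i = j then (0:ℝ) else ρmod ρsq i j t i j) = t
    rw [if_neg hij]
    exact if_pos (Or.inl ⟨rfl, rfl⟩)
  have hEji : ∀ t : ℝ, cmEnt rsq (ρmod ρsq i j t) (CMIdx.pt j) (CMIdx.pt i) = t := by
    intro t
    show (if j = i then (0:ℝ) else ρmod ρsq i j t j i) = t
    rw [if_neg (Ne.symm hij)]
    exact if_pos (Or.inr ⟨rfl, rfl⟩)
  -- succAbove computations
  have sa1zero : ∀ n : ℕ, (1 : Fin (n+2)).succAbove (0 : Fin (n+1)) = 0 := by
    intro n; exact Fin.one_succAbove_zero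
  have sa1succ : ∀ (n : ℕ) (s : Fin n), (1 : Fin (n+2)).succAbove s.succ = s.succ.succ := by
    intro n s
    rw [← Fin.succ_zero_eq_one', Fin.succ_succAbove_succ, Fin.succAbove_zero_apply]
  have sa2zero : (2 : Fin (k+1+1+1)).succAbove (0 : Fin (k+1+1)) = 0 := by
    rw [← Fin.succ_one_eq_two', Fin.succ_succAbove_zero]
  have sa2succ : ∀ s : Fin (k+1), (2 : Fin (k+1+1+1)).succAbove s.succ
      = ((1 : Fin (k+1+1)).succAbove s).succ := by
    intro s
    rw [← Fin.succ_one_eq_two', Fin.succ_succAbove_succ]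
  have hsaR : ∀ p : Fin (k+1), R1 ((1 : Fin (k+1+1)).succAbove p) = R0 p := by
    intro p
    refine Fin.cases ?_ (fun s => ?_) p
    · rw [sa1zero]; simp only [hR1, hR0, Fin.cons_zero]
    · rw [sa1succ]; simp only [hR1, hR0, Fin.cons_succ]
  have hsaC : ∀ p : Fin (k+1), C1 ((1 : Fin (k+1+1)).succAbove p) = R0 p := by
    intro p
    refine Fin.cases ?_ (fun s => ?_) p
    · rw [sa1zero]; simp only [hC1, hR0, Fin.cons_zero]
    · rw [sa1succ]; simp only [hC1, hR0, Fin.cons_succ]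
  have hsaA : ∀ p : Fin (k+1+1), R2 ((2 : Fin (k+1+1+1)).succAbove p) = R1 p := by
    intro p
    refine Fin.cases ?_ (fun s => ?_) p
    · rw [sa2zero]; simp only [hR2, hR1, Fin.cons_zero]
    · rw [sa2succ]
      refine Fin.cases ?_ (fun r => ?_) s
      · rw [sa1zero]; simp only [hR2, hR1, Fin.cons_succ, Fin.cons_zero]
      · rw [sa1succ]; simp only [hR2, hR1, Fin.cons_succ]
  have hsaB : ∀ p : Fin (k+1+1), R2 ((1 : Fin (k+1+1+1)).succAbove p) = C1 p := by
    intro p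
    refine Fin.cases ?_ (fun s => ?_) p
    · rw [sa1zero]; simp only [hR2, hC1, Fin.cons_zero]
    · rw [sa1succ]
      refine Fin.cases ?_ (fun r => ?_) s
      · simp only [hR2, hC1, Fin.cons_succ, Fin.cons_zero]
      · simp only [hR2, hC1, Fin.cons_succ]
  -- matrices
  set A1 : Matrix (Fin (k+1+1)) (Fin (k+1+1)) ℝ :=
    Matrix.of fun p q => cmEnt rsq ρsq (R1 p) (C1 q) with hA1
  set A2 : Matrix (Fin (k+1+1+1)) (Fin (k+1+1+1)) ℝ :=
    Matrix.of fun p q => cmEnt rsq ρsq (R2 p) (R2 q) with hA2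
  -- the minor B(0 K) as a determinant
  have hminor0 : ∀ t : ℝ, cmMinor rsq (ρmod ρsq i j t)
      (CMIdx.zero :: List.ofFn g) (CMIdx.zero :: List.ofFn g)
      = (A1.updateRow 1 (Pi.single 1 1)).det := by
    intro t
    rw [hL0, cmMinor_ofFn]
    rw [det_updRow_single A1 1 1]
    have hv : ((1 : Fin (k+1+1)) : ℕ) = 1 := by simp
    rw [hv]
    norm_num
    congr 1
    ext p q
    simp only [Matrix.submatrix_apply, Matrix.of_apply, hA1]
    rw [hsaR p, hsaC q]
    exact mkBoth t (R0 p) (R0 q) (cls0 p)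
  -- the minor B(0 1 K; 0 2 K) as a determinant
  have hminor1 : ∀ t : ℝ, cmMinor rsq (ρmod ρsq i j t)
      ([CMIdx.zero, CMIdx.pt i] ++ List.ofFn g) ([CMIdx.zero, CMIdx.pt j] ++ List.ofFn g)
      = (A1.updateRow 1 (Function.update (A1 1) 1 t)).det := by
    intro t
    rw [hL1, hL2, cmMinor_ofFn]
    congr 1
    ext p q
    simp only [Matrix.of_apply]
    by_cases hp : p = 1
    · subst hp
      rw [Matrix.updateRow_self]
      by_cases hq : q = 1
      · subst hq
        rw [Function.update_self, hR1one, hC1one, hEij]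
      · rw [Function.update_of_ne hq, hA1, Matrix.of_apply, hR1one]
        exact mki t (C1 q) (fun b hb => (cls1' q hq b hb).2)
    · rw [Matrix.updateRow_ne hp, hA1, Matrix.of_apply]
      exact mkBoth t (R1 p) (C1 q) (cls1 p hp)
  refine ⟨?_, ?_⟩
  · -- part (i)
    intro t0
    have hfun : (fun t : ℝ => cmMinor rsq (ρmod ρsq i j t)
        ([CMIdx.zero, CMIdx.pt i] ++ List.ofFn g) ([CMIdx.zero, CMIdx.pt j] ++ List.ofFn g))
        = fun t => (A1.updateRow 1 (Function.update (A1 1) 1 t)).det := funext hminor1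
    rw [hfun, hminor0 t0]
    exact hasDerivAt_det_one A1 1 1 t0
  · -- part (ii)
    intro t0
    have h12 : (1 : Fin (k+1+1+1)) ≠ 2 := by
      rw [← Fin.succ_zero_eq_one', ← Fin.succ_one_eq_two']
      intro hcl
      exact Fin.zero_ne_one (Fin.succ_injective _ hcl)
    have hsa1one : (1 : Fin (k+1+1+1)).succAbove (1 : Fin (k+1+1)) = 2 := by
      rw [← Fin.succ_zero_eq_one' (n := k+1), sa1succ, Fin.succ_zero_eq_one',
        Fin.succ_one_eq_two']
    have hsa2one : (2 : Fin (k+1+1+1)).succAbove (1 : Fin (k+1+1)) = 1 := by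
      rw [← Fin.succ_zero_eq_one' (n := k+1), sa2succ, sa1zero, Fin.succ_zero_eq_one']
    -- functional form
    have hfun2 : (fun t : ℝ => cmMinor rsq (ρmod ρsq i j t)
        ([CMIdx.zero, CMIdx.pt i, CMIdx.pt j] ++ List.ofFn g)
        ([CMIdx.zero, CMIdx.pt i, CMIdx.pt j] ++ List.ofFn g))
        = fun t => ((A2.updateRow 1 (Function.update (A2 1) 2 t)).updateRow 2
            (Function.update (A2 2) 1 t)).det := by
      funext t
      rw [hL3, cmMinor_ofFn]
      congr 1
      ext p q
      simp only [Matrix.of_apply]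
      by_cases hp2 : p = 2
      · subst hp2
        rw [Matrix.updateRow_self]
        by_cases hq1 : q = 1
        · subst hq1
          rw [Function.update_self, hR2two, hR2one, hEji]
        · rw [Function.update_of_ne hq1, hA2, Matrix.of_apply, hR2two]
          exact mkj t (R2 q) (fun b hb => cls2i q hq1 b hb)
      · rw [Matrix.updateRow_ne hp2]
        by_cases hp1 : p = 1
        · subst hp1
          rw [Matrix.updateRow_self]
          by_cases hq2 : q = 2
          · subst hq2
            rw [Function.update_self, hR2one, hR2two, hEij]
          · rw [Function.update_of_ne hq2, hA2, Matrix.of_apply, hR2one]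
            exact mki t (R2 q) (fun b hb => cls2j q hq2 b hb)
        · rw [Matrix.updateRow_ne hp1, hA2, Matrix.of_apply]
          apply mkBoth t (R2 p) (R2 q)
          intro a ha
          exact ⟨cls2i p hp1 a ha, cls2j p hp2 a ha⟩
    -- the matrix of the target minor at t0
    set M : Matrix (Fin (k+1+1)) (Fin (k+1+1)) ℝ :=
      Matrix.of fun p q => cmEnt rsq (ρmod ρsq i j t0) (R1 p) (C1 q) with hM
    have hMminor : cmMinor rsq (ρmod ρsq i j t0)
        ([CMIdx.zero, CMIdx.pt i] ++ List.ofFn g) ([CMIdx.zero, CMIdx.pt j] ++ List.ofFn g)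
        = M.det := by
      rw [hL1, hL2, cmMinor_ofFn]
    -- D2 computation
    have hD2 : ((A2.updateRow 1 (Function.update (A2 1) 2 t0)).updateRow 2
        (Pi.single 1 1)).det = - M.det := by
      set X : Matrix (Fin (k+1+1+1)) (Fin (k+1+1+1)) ℝ :=
        A2.updateRow 1 (Function.update (A2 1) 2 t0) with hX
      rw [det_updRow_single X 2 1]
      have hv : ((2 : Fin (k+1+1+1)) : ℕ) = 2 := by simp
      have hv1 : ((1 : Fin (k+1+1+1)) : ℕ) = 1 := by simp
      rw [hv, hv1]
      have hsub : X.submatrix (2 : Fin (k+1+1+1)).succAbove (1 : Fin (k+1+1+1)).succAbove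
          = M := by
        ext p q
        simp only [Matrix.submatrix_apply, hM, Matrix.of_apply]
        by_cases hp : p = 1
        · subst hp
          rw [hsa2one, hX, Matrix.updateRow_self]
          by_cases hq : q = 1
          · subst hq
            rw [hsa1one, Function.update_self, hR1one, hC1one, hEij]
          · have hne2 : (1 : Fin (k+1+1+1)).succAbove q ≠ 2 := by
              intro hcl
              exact hq (Fin.succAbove_right_injective (hcl.trans hsa1one.symm))
            rw [Function.update_of_ne hne2, hA2, Matrix.of_apply, hR2one, hsaB q, hR1one]
            exact (mki t0 (C1 q) (fun b hb => (cls1' q hq b hb).2)).symm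
        · have hne1 : (2 : Fin (k+1+1+1)).succAbove p ≠ 1 := by
            intro hcl
            exact hp (Fin.succAbove_right_injective (hcl.trans hsa2one.symm))
          rw [hX, Matrix.updateRow_ne hne1, hA2, Matrix.of_apply, hsaA p, hsaB q]
          exact (mkBoth t0 (R1 p) (C1 q) (cls1 p hp)).symm
      rw [hsub]
      norm_num
    -- D1 computation
    have hD1 : ((A2.updateRow 1 (Pi.single 2 1)).updateRow 2
        (Function.update (A2 2) 1 t0)).det = - M.det := by
      rw [updRow_comm A2 h12 (Pi.single 2 1) (Function.update (A2 2) 1 t0)]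
      set X : Matrix (Fin (k+1+1+1)) (Fin (k+1+1+1)) ℝ :=
        A2.updateRow 2 (Function.update (A2 2) 1 t0) with hX
      rw [det_updRow_single X 1 2]
      have hv : ((2 : Fin (k+1+1+1)) : ℕ) = 2 := by simp
      have hv1 : ((1 : Fin (k+1+1+1)) : ℕ) = 1 := by simp
      rw [hv, hv1]
      have hsub : X.submatrix (1 : Fin (k+1+1+1)).succAbove (2 : Fin (k+1+1+1)).succAbove
          = Mᵀ := by
        ext p q
        simp only [Matrix.submatrix_apply, Matrix.transpose_apply, hM, Matrix.of_apply]
        by_cases hp : p = 1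
        · subst hp
          rw [hsa1one, hX, Matrix.updateRow_self]
          by_cases hq : q = 1
          · subst hq
            rw [hsa2one, Function.update_self, hR1one, hC1one, hEij]
          · have hne1 : (2 : Fin (k+1+1+1)).succAbove q ≠ 1 := by
              intro hcl
              exact hq (Fin.succAbove_right_injective (hcl.trans hsa2one.symm))
            rw [Function.update_of_ne hne1, hA2, Matrix.of_apply, hR2two, hsaA q, hC1one]
            exact ((cmEnt_symm rsq _ (ρmod_symm ρsq hsym i j t0) (R1 q) (CMIdx.pt j)).trans
              (mkj t0 (R1 q) (fun b hb => (cls1 q hq b hb).1))).symm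
        · have hne2 : (1 : Fin (k+1+1+1)).succAbove p ≠ 2 := by
            intro hcl
            exact hp (Fin.succAbove_right_injective (hcl.trans hsa1one.symm))
          rw [hX, Matrix.updateRow_ne hne2, hA2, Matrix.of_apply, hsaB p, hsaA q]
          exact ((cmEnt_symm rsq _ (ρmod_symm ρsq hsym i j t0) (R1 q) (C1 p)).trans
            (mkBoth t0 (C1 p) (R1 q) (fun a ha => cls1' p hp a ha))).symm
      rw [hsub, Matrix.det_transpose]
      norm_num
    -- assemble
    rw [hfun2, hMminor]
    have hd := hasDerivAt_det_two A2 1 2 h12 2 1 t0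
    rw [hD1, hD2] at hd
    convert hd using 1
    ring
end

section
/- Let p ≥ 1 and let μ_1, …, μ_{p+1}, k_1, …, k_p, a, b ∈ {1, …, m} be pairwise distinct indices, with all r_j^2, ρ_{jk}^2 arbitrary reals. Write K_{p−1} = (k_1, …, k_{p−1}) and K_p = (k_1, …, k_p). Then Σ_{ν=1}^{p+1} (−1)^{p+1−ν} B(0 μ_1 … μ̂_ν … μ_{p+1} b ; 0 K_{p−1} a b) · B(0 ⋆ K_p b ; 0 μ_ν K_p b) = B(0 μ_1 … μ_{p+1} b ; 0 K_p a b) · B(0 K_{p−1} ⋆ b ; 0 K_p b) + B(0 μ_1 … μ_{p+1} b ; 0 K_{p−1} a ⋆ b) · B(0 K_p b), where μ̂_ν means that μ_ν is omitted. -/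
namespace CMAux
variable {α : Type*}

lemma comp_succAbove_succ {n : ℕ} (x : α) (f : Fin (n+1) → α) (w : Fin (n+1)) :
    (Fin.cons x f) ∘ (Fin.succ w).succAbove = Fin.cons x (f ∘ w.succAbove) := by
  funext j
  refine Fin.cases ?_ (fun i => ?_) j
  · simp
  · simp [Fin.succ_succAbove_succ]

lemma comp_succAbove_castSucc {n : ℕ} (f : Fin (n+1) → α) (y : α) (w : Fin (n+1)) :
    (Fin.snoc f y) ∘ (Fin.castSucc w).succAbove = Fin.snoc (f ∘ w.succAbove) y := by
  funext j
  refine Fin.lastCases ?_ (fun i => ?_) j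
  · have : (Fin.castSucc w).succAbove (Fin.last n) = Fin.last (n+1) := by
      rw [Fin.succAbove]
      split
      · next h => exact absurd h (by simp [Fin.castSucc_lt_castSucc_iff, Fin.le_last,
          Fin.not_lt.mpr (Fin.le_last w)])
      · rfl
    simp [this]
  · simp [Fin.castSucc_succAbove_castSucc]

lemma cons_comp_castSucc {n : ℕ} (x : α) (f : Fin (n+1) → α) :
    (Fin.cons x f) ∘ (Fin.castSucc : Fin (n+1) → Fin (n+2)) = Fin.cons x (f ∘ Fin.castSucc) := by
  funext j
  refine Fin.cases ?_ (fun i => ?_) j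
  · simp
  · rw [Function.comp_apply, ← Fin.succ_castSucc]
    simp

lemma cons_comp_succ {n : ℕ} (x : α) (f : Fin (n+1) → α) :
    (Fin.cons x f) ∘ Fin.succ = f := by
  funext j; simp

lemma cons_cons_comp_succAbove_one {n : ℕ} (x y : α) (g : Fin (n+1) → α) :
    (Fin.cons x (Fin.cons y g)) ∘ ((1 : Fin (n+3)).succAbove) = Fin.cons x g := by
  rw [show (1 : Fin (n+3)) = Fin.succ 0 from (Fin.succ_zero_eq_one).symm,
    comp_succAbove_succ, Fin.succAbove_zero, cons_comp_succ]

/-- Extension of a permutation of `Fin n` to `Fin (n+1)` fixing `0`. -/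
def liftPerm {n : ℕ} (e : Equiv.Perm (Fin n)) : Equiv.Perm (Fin (n+1)) :=
  Equiv.Perm.decomposeFin.symm (0, e)

@[simp] lemma liftPerm_zero {n : ℕ} (e : Equiv.Perm (Fin n)) : liftPerm e 0 = 0 :=
  Equiv.Perm.decomposeFin_symm_apply_zero 0 e

@[simp] lemma liftPerm_succ {n : ℕ} (e : Equiv.Perm (Fin n)) (x : Fin n) :
    liftPerm e x.succ = (e x).succ := by
  rw [liftPerm, Equiv.Perm.decomposeFin_symm_apply_succ, Equiv.swap_self]
  rfl

@[simp] lemma sign_liftPerm {n : ℕ} (e : Equiv.Perm (Fin n)) :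
    Equiv.Perm.sign (liftPerm e) = Equiv.Perm.sign e := by
  rw [liftPerm, Equiv.Perm.decomposeFin.symm_sign, if_pos rfl, one_mul]

lemma cons_comp_liftPerm {n : ℕ} (x : α) (f : Fin n → α) (e : Equiv.Perm (Fin n)) :
    (Fin.cons x f) ∘ (liftPerm e) = Fin.cons x (f ∘ e) := by
  funext j
  refine Fin.cases ?_ (fun i => ?_) j <;> simp



lemma rot_eq {n : ℕ} (x : α) (g : Fin n → α) (y : α) :
    (Fin.snoc (Fin.snoc g x) y : Fin (n+2) → α) =
      (Fin.cons x (Fin.snoc g y) : Fin (n+2) → α) ∘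
        Fin.cycleRange (Fin.castSucc (Fin.last n)) := by
  funext j
  refine Fin.lastCases ?_ (fun u => ?_) j
  · rw [Function.comp_apply, Fin.cycleRange_of_gt (by simp [Fin.lt_def])]
    rw [show Fin.last (n+1) = Fin.succ (Fin.last n) from (Fin.succ_last n).symm, Fin.cons_succ,
      Fin.snoc_last]
    rw [Fin.succ_last, Fin.snoc_last]
  · refine Fin.lastCases ?_ (fun v => ?_) u
    · rw [Function.comp_apply, Fin.cycleRange_self, Fin.cons_zero, Fin.snoc_castSucc,
        Fin.snoc_last]
    · rw [Function.comp_apply, Fin.cycleRange_of_lt (by simp [Fin.lt_def, v.isLt]),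
        show (Fin.castSucc (Fin.castSucc v)) + 1 = Fin.succ (Fin.castSucc v) from ?_,
        Fin.cons_succ, Fin.snoc_castSucc, Fin.snoc_castSucc, Fin.snoc_castSucc]
      ext
      rw [Fin.val_add_one_of_lt (by simp [Fin.lt_def])]
      simp

lemma swap_eq {n : ℕ} (g : Fin (n+1) → α) (x y : α) :
    (Fin.snoc (Fin.snoc g x) y : Fin (n+3) → α) =
      (Fin.snoc (Fin.snoc (Fin.snoc (g ∘ Fin.castSucc) x) (g (Fin.last n))) y : Fin (n+3) → α) ∘
        Equiv.swap (Fin.castSucc (Fin.castSucc (Fin.last n))) (Fin.castSucc (Fin.last (n+1))) := by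
  funext j
  refine Fin.lastCases ?_ (fun u => ?_) j
  · rw [Function.comp_apply,
      Equiv.swap_apply_of_ne_of_ne (Fin.ne_of_val_ne (by simp)) (Fin.ne_of_val_ne (by simp))]
    simp
  · refine Fin.lastCases ?_ (fun w => ?_) u
    · rw [Function.comp_apply, Equiv.swap_apply_right]
      simp
    · refine Fin.lastCases ?_ (fun v => ?_) w
      · rw [Function.comp_apply, Equiv.swap_apply_left]
        simp
      · rw [Function.comp_apply,
          Equiv.swap_apply_of_ne_of_ne
            (Fin.ne_of_val_ne (by simp; omega)) (Fin.ne_of_val_ne (by simp; omega))]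
        simp


section Core

variable {ι : Type*} (E : ι → ι → ℝ) {q : ℕ} (μ : Fin (q+2) → ι) (k : Fin (q+1) → ι)
  (z st a b : ι)

/-- rows `(0, ⋆, K_p, b)` -/
def Tr : Fin (q+4) → ι := Fin.cons z (Fin.cons st (Fin.snoc k b))
/-- cols `(0, K_p, b)` -/
def Ckb : Fin (q+3) → ι := Fin.cons z (Fin.snoc k b)
/-- cols `(0, K_{p-1}, a, b)` -/
def Csm : Fin (q+3) → ι := Fin.cons z (Fin.snoc (Fin.snoc (k ∘ Fin.castSucc) a) b)
/-- cols `(0, K_{p-1}, a, s, b)` -/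
def CD (s : ι) : Fin (q+4) → ι :=
  Fin.cons z (Fin.snoc (Fin.snoc (Fin.snoc (k ∘ Fin.castSucc) a) s) b)
/-- rows `(0, μ₁, …, μ_{p+1}, b)` -/
def Rb : Fin (q+4) → ι := Fin.cons z (Fin.snoc μ b)
/-- rows `(0, μ₁, …, μ̂_ν, …, μ_{p+1}, b)` -/
def R1 (ν : Fin (q+2)) : Fin (q+3) → ι := Fin.cons z (Fin.snoc (μ ∘ ν.succAbove) b)

noncomputable def Fm (s : ι) : ℝ :=
  Matrix.det (Matrix.of fun i j : Fin (q+4) =>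
    E (Tr k z st b i) ((Fin.cons z (Fin.cons s (Fin.snoc k b)) : Fin (q+4) → ι) j))

noncomputable def Mi (i : Fin (q+4)) : ℝ :=
  Matrix.det (Matrix.of fun r c : Fin (q+3) => E (Tr k z st b (i.succAbove r)) (Ckb k z b c))

noncomputable def m1 (ν : Fin (q+2)) : ℝ :=
  Matrix.det (Matrix.of fun i j : Fin (q+3) => E (R1 μ z b ν i) (Csm k z a b j))

noncomputable def Dm (s : ι) : ℝ :=
  Matrix.det (Matrix.of fun r c : Fin (q+4) => E (Rb μ z b r) (CD k z a b s c))

noncomputable def Xd : ℝ :=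
  Matrix.det (Matrix.of fun i j : Fin (q+3) => E ((Fin.snoc μ b : Fin (q+3) → ι) i) (Csm k z a b j))

noncomputable def Yd : ℝ :=
  Matrix.det (Matrix.of fun i j : Fin (q+3) => E ((Fin.cons z μ : Fin (q+3) → ι) i) (Csm k z a b j))

lemma hF (s : ι) : Fm E k z st b s =
    ∑ i : Fin (q+4), (-1 : ℝ) ^ ((i : ℕ) + 1) * E (Tr k z st b i) s * Mi E k z st b i := by
  rw [Fm, Matrix.det_succ_column _ 1]
  refine Finset.sum_congr rfl fun i _ => ?_
  have hcol : ∀ c : Fin (q+3),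
      (Fin.cons z (Fin.cons s (Fin.snoc k b)) : Fin (q+4) → ι) ((1 : Fin (q+4)).succAbove c)
        = Ckb k z b c := fun c =>
    congrFun (cons_cons_comp_succAbove_one z s (Fin.snoc k b)) c
  have h1 : ((1 : Fin (q+4)) : ℕ) = 1 := rfl
  have hent : (Fin.cons z (Fin.cons s (Fin.snoc k b)) : Fin (q+4) → ι) 1 = s := by
    rw [show (1 : Fin (q+4)) = Fin.succ 0 from (Fin.succ_zero_eq_one).symm]
    simp
  have hsub : ((Matrix.of fun i j => E (Tr k z st b i)
      ((Fin.cons z (Fin.cons s (Fin.snoc k b)) : Fin (q+4) → ι) j)).submatrix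
      i.succAbove ((1 : Fin (q+4)).succAbove)).det = Mi E k z st b i := by
    rw [Mi]
    congr 1
    ext r c
    simp [hcol]
  rw [hsub, Matrix.of_apply, hent, h1]

lemma hFz : Fm E k z st b z = 0 := by
  apply Matrix.det_zero_of_column_eq (show (0 : Fin (q+4)) ≠ 1 from Fin.zero_ne_one)
  intro i
  have h0 : (Fin.cons z (Fin.cons z (Fin.snoc k b)) : Fin (q+4) → ι) 0 = z := rfl
  have h1 : (Fin.cons z (Fin.cons z (Fin.snoc k b)) : Fin (q+4) → ι) 1 = z := by
    rw [show (1 : Fin (q+4)) = Fin.succ 0 from (Fin.succ_zero_eq_one).symm]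
    simp
  simp [h0, h1]

lemma hFb : Fm E k z st b b = 0 := by
  apply Matrix.det_zero_of_column_eq
    (show (1 : Fin (q+4)) ≠ Fin.last (q+3) from Fin.ne_of_val_ne (by simp [Fin.val_last]))
  intro i
  have h1 : (Fin.cons z (Fin.cons b (Fin.snoc k b)) : Fin (q+4) → ι) 1 = b := by
    rw [show (1 : Fin (q+4)) = Fin.succ 0 from (Fin.succ_zero_eq_one).symm]
    simp
  have h2 : (Fin.cons z (Fin.cons b (Fin.snoc k b)) : Fin (q+4) → ι) (Fin.last (q+3)) = b := by
    rw [show Fin.last (q+3) = Fin.succ (Fin.last (q+2)) from (Fin.succ_last _).symm,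
      Fin.cons_succ,
      show Fin.last (q+2) = Fin.succ (Fin.last (q+1)) from (Fin.succ_last _).symm,
      Fin.cons_succ, Fin.snoc_last]
  simp [h1, h2]

lemma hD (hE : ∀ x y, E x y = E y x) (s : ι) : Dm E μ k z a b s =
    (-1:ℝ)^q * E z s * Xd E μ k z a b
  + (∑ ν : Fin (q+2), (-1:ℝ)^((q+1) - (ν:ℕ)) * m1 E μ k z a b ν * E s (μ ν))
  - E b s * Yd E μ k z a b := by
  rw [Dm, Matrix.det_succ_column _ (Fin.succ (Fin.castSucc (Fin.last (q+1))))]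
  have hcol : (CD k z a b s : Fin (q+4) → ι) ∘
      (Fin.succ (Fin.castSucc (Fin.last (q+1)))).succAbove = Csm k z a b := by
    rw [CD, comp_succAbove_succ, comp_succAbove_castSucc, Fin.succAbove_last,
      Fin.snoc_comp_castSucc, Csm]
  have hval : (CD k z a b s : Fin (q+4) → ι) (Fin.succ (Fin.castSucc (Fin.last (q+1)))) = s := by
    rw [CD, Fin.cons_succ, Fin.snoc_castSucc, Fin.snoc_last]
  have hj : ((Fin.succ (Fin.castSucc (Fin.last (q+1)))) : ℕ) = q + 2 := by
    simp
  rw [Fin.sum_univ_succ, Fin.sum_univ_castSucc]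
  -- r = 0 term
  have t0 : (-1:ℝ) ^ (((0 : Fin (q+4)) : ℕ) + ↑(Fin.succ (Fin.castSucc (Fin.last (q+1))))) *
      (Matrix.of fun r c : Fin (q+4) => E (Rb μ z b r) (CD k z a b s c)) 0
        (Fin.succ (Fin.castSucc (Fin.last (q+1)))) *
      ((Matrix.of fun r c : Fin (q+4) => E (Rb μ z b r) (CD k z a b s c)).submatrix
        (Fin.succAbove 0) (Fin.succ (Fin.castSucc (Fin.last (q+1)))).succAbove).det
      = (-1:ℝ)^q * E z s * Xd E μ k z a b := by
    have hrows : (Rb μ z b : Fin (q+4) → ι) ∘ (Fin.succAbove (0 : Fin (q+4))) = Fin.snoc μ b := by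
      rw [Rb, Fin.succAbove_zero, cons_comp_succ]
    have hsub : ((Matrix.of fun r c : Fin (q+4) => E (Rb μ z b r) (CD k z a b s c)).submatrix
        (Fin.succAbove 0) (Fin.succ (Fin.castSucc (Fin.last (q+1)))).succAbove).det
        = Xd E μ k z a b := by
      rw [Xd]
      congr 1
      ext r c
      simp only [Matrix.submatrix_apply, Matrix.of_apply]
      conv_rhs => rw [← hrows, ← hcol]
      rfl
    rw [hsub, Matrix.of_apply, hval, hj]
    have : (Rb μ z b : Fin (q+4) → ι) 0 = z := rfl
    rw [this]
    have : ((0 : Fin (q+4)) : ℕ) = 0 := rfl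
    rw [this, zero_add, show q + 2 = q + 2 * 1 from by ring, pow_add, pow_mul, neg_one_sq,
      one_pow, mul_one]
  -- middle terms
  have tmid : ∀ ν : Fin (q+2),
      (-1:ℝ) ^ ((((Fin.castSucc ν).succ : Fin (q+4)) : ℕ) +
          ↑(Fin.succ (Fin.castSucc (Fin.last (q+1))))) *
      (Matrix.of fun r c : Fin (q+4) => E (Rb μ z b r) (CD k z a b s c)) (Fin.castSucc ν).succ
        (Fin.succ (Fin.castSucc (Fin.last (q+1)))) *
      ((Matrix.of fun r c : Fin (q+4) => E (Rb μ z b r) (CD k z a b s c)).submatrix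
        ((Fin.castSucc ν).succ).succAbove (Fin.succ (Fin.castSucc (Fin.last (q+1)))).succAbove).det
      = (-1:ℝ)^((q+1) - (ν:ℕ)) * m1 E μ k z a b ν * E s (μ ν) := by
    intro ν
    have hrows : (Rb μ z b : Fin (q+4) → ι) ∘ ((Fin.castSucc ν).succ).succAbove
        = R1 μ z b ν := by
      rw [Rb, comp_succAbove_succ, comp_succAbove_castSucc, R1]
    have hsub : ((Matrix.of fun r c : Fin (q+4) => E (Rb μ z b r) (CD k z a b s c)).submatrix
        ((Fin.castSucc ν).succ).succAbove (Fin.succ (Fin.castSucc (Fin.last (q+1)))).succAbove).det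
        = m1 E μ k z a b ν := by
      rw [m1]
      congr 1
      ext r c
      simp only [Matrix.submatrix_apply, Matrix.of_apply]
      conv_rhs => rw [← hrows, ← hcol]
      rfl
    have hent : (Rb μ z b : Fin (q+4) → ι) (Fin.castSucc ν).succ = μ ν := by
      rw [Rb, Fin.cons_succ, Fin.snoc_castSucc]
    have hvv : (((Fin.castSucc ν).succ : Fin (q+4)) : ℕ) = (ν : ℕ) + 1 := by simp
    rw [hsub, Matrix.of_apply, hval, hent, hvv, hj, hE (μ ν) s]
    have hsg : ((-1:ℝ)) ^ ((ν : ℕ) + 1 + (q + 2)) = ((-1:ℝ)) ^ ((q+1) - (ν:ℕ)) := by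
      have hle : (ν : ℕ) ≤ q + 1 := Nat.lt_succ_iff.mp ν.isLt
      rw [show (ν : ℕ) + 1 + (q + 2) = ((q+1) - (ν:ℕ)) + 2 * ((ν:ℕ) + 1) from by omega,
        pow_add, pow_mul, neg_one_sq, one_pow, mul_one]
    rw [hsg]
    ring
  -- last term
  have tlast : (-1:ℝ) ^ (((((Fin.last (q+2)).succ : Fin (q+4))) : ℕ) +
          ((Fin.succ (Fin.castSucc (Fin.last (q+1))) : Fin (q+4)) : ℕ)) *
      (Matrix.of fun r c : Fin (q+4) => E (Rb μ z b r) (CD k z a b s c)) (Fin.last (q+2)).succ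
        (Fin.succ (Fin.castSucc (Fin.last (q+1)))) *
      ((Matrix.of fun r c : Fin (q+4) => E (Rb μ z b r) (CD k z a b s c)).submatrix
        ((Fin.last (q+2)).succ).succAbove (Fin.succ (Fin.castSucc (Fin.last (q+1)))).succAbove).det
      = -(E b s * Yd E μ k z a b) := by
    have hrows : (Rb μ z b : Fin (q+4) → ι) ∘ ((Fin.last (q+2)).succ).succAbove
        = Fin.cons z μ := by
      rw [Rb, Fin.succ_last, Fin.succAbove_last, cons_comp_castSucc, Fin.snoc_comp_castSucc]
    have hsub : ((Matrix.of fun r c : Fin (q+4) => E (Rb μ z b r) (CD k z a b s c)).submatrix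
        ((Fin.last (q+2)).succ).succAbove (Fin.succ (Fin.castSucc (Fin.last (q+1)))).succAbove).det
        = Yd E μ k z a b := by
      rw [Yd]
      congr 1
      ext r c
      simp only [Matrix.submatrix_apply, Matrix.of_apply]
      conv_rhs => rw [← hrows, ← hcol]
      rfl
    have hent : (Rb μ z b : Fin (q+4) → ι) (Fin.last (q+2)).succ = b := by
      rw [Rb, Fin.cons_succ, Fin.snoc_last]
    have hvv : (((Fin.last (q+2)).succ : Fin (q+4)) : ℕ) = q + 3 := by simp
    rw [hsub, Matrix.of_apply, hval, hent, hvv, hj]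
    rw [show q + 3 + (q + 2) = 2 * (q + 2) + 1 from by ring, pow_succ, pow_mul, neg_one_sq,
      one_pow, one_mul]
    ring
  rw [t0, tlast, Finset.sum_congr rfl fun ν _ => tmid ν]
  ring

lemma core (hE : ∀ x y, E x y = E y x) :
    (∑ ν : Fin (q+2), (-1:ℝ)^((q+1) - (ν:ℕ)) * m1 E μ k z a b ν * Fm E k z st b (μ ν))
    = Matrix.det (Matrix.of fun i j : Fin (q+4) =>
          E (Rb μ z b i) ((Fin.cons z (Fin.snoc (Fin.snoc k a) b) : Fin (q+4) → ι) j)) *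
      Matrix.det (Matrix.of fun i j : Fin (q+3) =>
          E ((Fin.cons z (Fin.snoc (Fin.snoc (k ∘ Fin.castSucc) st) b) : Fin (q+3) → ι) i)
            (Ckb k z b j)) +
      Dm E μ k z a b st *
      Matrix.det (Matrix.of fun i j : Fin (q+3) => E (Ckb k z b i) (Ckb k z b j)) := by
  have hSum : ∀ s : ι,
      (∑ ν : Fin (q+2), (-1:ℝ)^((q+1)-(ν:ℕ)) * m1 E μ k z a b ν * E s (μ ν))
      = Dm E μ k z a b s - (-1:ℝ)^q * E s z * Xd E μ k z a b
          + E s b * Yd E μ k z a b := by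
    intro s
    rw [hD E μ k z a b hE s, hE z s, hE b s]
    ring
  have step1 : (∑ ν : Fin (q+2),
        (-1:ℝ)^((q+1) - (ν:ℕ)) * m1 E μ k z a b ν * Fm E k z st b (μ ν))
      = ∑ i : Fin (q+4),
          (-1:ℝ)^((i:ℕ)+1) * Mi E k z st b i * Dm E μ k z a b (Tr k z st b i) := by
    calc (∑ ν : Fin (q+2), (-1:ℝ)^((q+1) - (ν:ℕ)) * m1 E μ k z a b ν * Fm E k z st b (μ ν))
        = ∑ ν : Fin (q+2), ∑ i : Fin (q+4), (-1:ℝ)^((q+1) - (ν:ℕ)) * m1 E μ k z a b ν *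
            ((-1:ℝ) ^ ((i : ℕ) + 1) * E (Tr k z st b i) (μ ν) * Mi E k z st b i) := by
          refine Finset.sum_congr rfl fun ν _ => ?_
          rw [hF E k z st b (μ ν), Finset.mul_sum]
      _ = ∑ i : Fin (q+4), ∑ ν : Fin (q+2), (-1:ℝ)^((q+1) - (ν:ℕ)) * m1 E μ k z a b ν *
            ((-1:ℝ) ^ ((i : ℕ) + 1) * E (Tr k z st b i) (μ ν) * Mi E k z st b i) :=
          Finset.sum_comm
      _ = ∑ i : Fin (q+4), (-1:ℝ) ^ ((i : ℕ) + 1) * Mi E k z st b i *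
            (∑ ν : Fin (q+2), (-1:ℝ)^((q+1) - (ν:ℕ)) * m1 E μ k z a b ν *
              E (Tr k z st b i) (μ ν)) := by
          refine Finset.sum_congr rfl fun i _ => ?_
          rw [Finset.mul_sum]
          exact Finset.sum_congr rfl fun ν _ => by ring
      _ = ∑ i : Fin (q+4), (-1:ℝ) ^ ((i : ℕ) + 1) * Mi E k z st b i *
            (Dm E μ k z a b (Tr k z st b i)
              - (-1:ℝ)^q * E (Tr k z st b i) z * Xd E μ k z a b
              + E (Tr k z st b i) b * Yd E μ k z a b) := by
          refine Finset.sum_congr rfl fun i _ => ?_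
          rw [hSum (Tr k z st b i)]
      _ = (∑ i : Fin (q+4), (-1:ℝ)^((i:ℕ)+1) * Mi E k z st b i *
              Dm E μ k z a b (Tr k z st b i))
          - (-1:ℝ)^q * Xd E μ k z a b *
            (∑ i : Fin (q+4), (-1:ℝ)^((i:ℕ)+1) * E (Tr k z st b i) z * Mi E k z st b i)
          + Yd E μ k z a b *
            (∑ i : Fin (q+4), (-1:ℝ)^((i:ℕ)+1) * E (Tr k z st b i) b * Mi E k z st b i) := by
          rw [Finset.mul_sum, Finset.mul_sum, ← Finset.sum_sub_distrib, ← Finset.sum_add_distrib]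
          exact Finset.sum_congr rfl fun i _ => by ring
      _ = ∑ i : Fin (q+4),
            (-1:ℝ)^((i:ℕ)+1) * Mi E k z st b i * Dm E μ k z a b (Tr k z st b i) := by
          rw [← hF E k z st b z, ← hF E k z st b b, hFz E k z st b, hFb E k z st b]
          ring
  rw [step1, Fin.sum_univ_succ, Fin.sum_univ_succ, Fin.sum_univ_castSucc, Fin.sum_univ_castSucc]
  -- the i = 0 term vanishes
  have hz0 : Dm E μ k z a b (Tr k z st b 0) = 0 := by
    rw [show Tr k z st b 0 = z from rfl]
    apply Matrix.det_zero_of_column_eq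
      (show (0 : Fin (q+4)) ≠ Fin.succ (Fin.castSucc (Fin.last (q+1)))
        from (Fin.succ_ne_zero _).symm)
    intro r
    have e0 : (CD k z a b z : Fin (q+4) → ι) 0 = z := rfl
    have e1 : (CD k z a b z : Fin (q+4) → ι) (Fin.succ (Fin.castSucc (Fin.last (q+1)))) = z := by
      rw [CD, Fin.cons_succ, Fin.snoc_castSucc, Fin.snoc_last]
    simp only [Matrix.of_apply, e0, e1]
  -- the middle terms vanish
  have hzmid : ∀ v : Fin q,
      Dm E μ k z a b (Tr k z st b (Fin.succ (Fin.succ (Fin.castSucc (Fin.castSucc v))))) = 0 := by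
    intro v
    have hTr : Tr k z st b (Fin.succ (Fin.succ (Fin.castSucc (Fin.castSucc v))))
        = k (Fin.castSucc v) := by
      rw [Tr, Fin.cons_succ, Fin.cons_succ, Fin.snoc_castSucc]
    rw [hTr]
    apply Matrix.det_zero_of_column_eq
      (i := Fin.succ (Fin.castSucc (Fin.castSucc (Fin.castSucc v))))
      (j := Fin.succ (Fin.castSucc (Fin.last (q+1))))
      (Fin.ne_of_val_ne (by simp; omega))
    intro r
    have e0 : (CD k z a b (k (Fin.castSucc v)) : Fin (q+4) → ι)
        (Fin.succ (Fin.castSucc (Fin.castSucc (Fin.castSucc v)))) = k (Fin.castSucc v) := by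
      rw [CD, Fin.cons_succ, Fin.snoc_castSucc, Fin.snoc_castSucc, Fin.snoc_castSucc]
      rfl
    have e1 : (CD k z a b (k (Fin.castSucc v)) : Fin (q+4) → ι)
        (Fin.succ (Fin.castSucc (Fin.last (q+1)))) = k (Fin.castSucc v) := by
      rw [CD, Fin.cons_succ, Fin.snoc_castSucc, Fin.snoc_last]
    simp only [Matrix.of_apply, e0, e1]
  -- the i = last term vanishes
  have hzlast : Dm E μ k z a b (Tr k z st b (Fin.succ (Fin.succ (Fin.last (q+1))))) = 0 := by
    have hTr : Tr k z st b (Fin.succ (Fin.succ (Fin.last (q+1)))) = b := by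
      rw [Tr, Fin.cons_succ, Fin.cons_succ, Fin.snoc_last]
    rw [hTr]
    apply Matrix.det_zero_of_column_eq
      (i := Fin.succ (Fin.castSucc (Fin.last (q+1))))
      (j := Fin.last (q+3))
      (Fin.ne_of_val_ne (by simp [Fin.val_last]))
    intro r
    have e0 : (CD k z a b b : Fin (q+4) → ι)
        (Fin.succ (Fin.castSucc (Fin.last (q+1)))) = b := by
      rw [CD, Fin.cons_succ, Fin.snoc_castSucc, Fin.snoc_last]
    have e1 : (CD k z a b b : Fin (q+4) → ι) (Fin.last (q+3)) = b := by
      rw [show Fin.last (q+3) = Fin.succ (Fin.last (q+2)) from (Fin.succ_last _).symm,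
        CD, Fin.cons_succ, Fin.snoc_last]
    simp only [Matrix.of_apply, e0, e1]
  -- the i = 1 term
  have hTr1 : Tr k z st b (Fin.succ 0) = st := by
    rw [Tr, Fin.cons_succ, Fin.cons_zero]
  have hMi1 : Mi E k z st b (Fin.succ 0)
      = Matrix.det (Matrix.of fun i j : Fin (q+3) => E (Ckb k z b i) (Ckb k z b j)) := by
    have hr : (Tr k z st b : Fin (q+4) → ι) ∘ (Fin.succ (0 : Fin (q+3))).succAbove
        = Ckb k z b := by
      rw [Tr, Fin.succ_zero_eq_one, cons_cons_comp_succAbove_one, Ckb]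
    rw [Mi]
    congr 1
    ext r c
    simp only [Matrix.of_apply]
    rw [show Tr k z st b ((Fin.succ (0 : Fin (q+3))).succAbove r) = Ckb k z b r
      from congrFun hr r]
  -- the i = q+2 term
  have hTrq : Tr k z st b (Fin.succ (Fin.succ (Fin.castSucc (Fin.last q)))) = k (Fin.last q) := by
    rw [Tr, Fin.cons_succ, Fin.cons_succ, Fin.snoc_castSucc]
  have hvq : ((Fin.succ (Fin.succ (Fin.castSucc (Fin.last q))) : Fin (q+4)) : ℕ) = q + 2 := by
    simp
  have hMiq : Mi E k z st b (Fin.succ (Fin.succ (Fin.castSucc (Fin.last q))))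
      = (-1:ℝ)^q * Matrix.det (Matrix.of fun i j : Fin (q+3) =>
          E ((Fin.cons z (Fin.snoc (Fin.snoc (k ∘ Fin.castSucc) st) b) : Fin (q+3) → ι) i)
            (Ckb k z b j)) := by
    have hr : (Tr k z st b : Fin (q+4) → ι)
        ∘ (Fin.succ (Fin.succ (Fin.castSucc (Fin.last q)))).succAbove
        = Fin.cons z (Fin.cons st (Fin.snoc (k ∘ Fin.castSucc) b)) := by
      rw [Tr, comp_succAbove_succ, comp_succAbove_succ, comp_succAbove_castSucc,
        Fin.succAbove_last]
    have hMi' : Mi E k z st b (Fin.succ (Fin.succ (Fin.castSucc (Fin.last q))))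
        = Matrix.det (Matrix.of fun r c : Fin (q+3) =>
            E ((Fin.cons z (Fin.cons st (Fin.snoc (k ∘ Fin.castSucc) b)) : Fin (q+3) → ι) r)
              (Ckb k z b c)) := by
      rw [Mi]
      congr 1
      ext r c
      simp only [Matrix.of_apply]
      rw [show Tr k z st b ((Fin.succ (Fin.succ (Fin.castSucc (Fin.last q)))).succAbove r)
        = (Fin.cons z (Fin.cons st (Fin.snoc (k ∘ Fin.castSucc) b)) : Fin (q+3) → ι) r
        from congrFun hr r]
    have hperm : (Fin.cons z (Fin.snoc (Fin.snoc (k ∘ Fin.castSucc) st) b) : Fin (q+3) → ι)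
        = (Fin.cons z (Fin.cons st (Fin.snoc (k ∘ Fin.castSucc) b)) : Fin (q+3) → ι)
          ∘ liftPerm (Fin.cycleRange (Fin.castSucc (Fin.last q))) := by
      rw [cons_comp_liftPerm]
      rw [rot_eq st (k ∘ Fin.castSucc) b]
    have hdet : Matrix.det (Matrix.of fun i j : Fin (q+3) =>
          E ((Fin.cons z (Fin.snoc (Fin.snoc (k ∘ Fin.castSucc) st) b) : Fin (q+3) → ι) i)
            (Ckb k z b j))
        = (-1:ℝ)^q * Matrix.det (Matrix.of fun r c : Fin (q+3) =>
            E ((Fin.cons z (Fin.cons st (Fin.snoc (k ∘ Fin.castSucc) b)) : Fin (q+3) → ι) r)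
              (Ckb k z b c)) := by
      rw [show (Matrix.of fun i j : Fin (q+3) =>
          E ((Fin.cons z (Fin.snoc (Fin.snoc (k ∘ Fin.castSucc) st) b) : Fin (q+3) → ι) i)
            (Ckb k z b j))
        = (Matrix.of fun r c : Fin (q+3) =>
            E ((Fin.cons z (Fin.cons st (Fin.snoc (k ∘ Fin.castSucc) b)) : Fin (q+3) → ι) r)
              (Ckb k z b c)).submatrix (liftPerm (Fin.cycleRange (Fin.castSucc (Fin.last q)))) id
        from by
          ext r c
          simp only [Matrix.submatrix_apply, Matrix.of_apply, id]
          rw [show (Fin.cons z (Fin.snoc (Fin.snoc (k ∘ Fin.castSucc) st) b) : Fin (q+3) → ι) r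
            = (Fin.cons z (Fin.cons st (Fin.snoc (k ∘ Fin.castSucc) b)) : Fin (q+3) → ι)
                (liftPerm (Fin.cycleRange (Fin.castSucc (Fin.last q))) r)
            from congrFun hperm r]]
      rw [Matrix.det_permute, sign_liftPerm, Fin.sign_cycleRange]
      push_cast
      norm_num
    rw [hMi', hdet]
    rw [← mul_assoc, ← pow_add, show q + q = 2 * q from by ring, pow_mul, neg_one_sq, one_pow,
      one_mul]
  have hDq : Dm E μ k z a b (k (Fin.last q))
      = -(Matrix.det (Matrix.of fun i j : Fin (q+4) =>
          E (Rb μ z b i) ((Fin.cons z (Fin.snoc (Fin.snoc k a) b) : Fin (q+4) → ι) j))) := by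
    have hcols : (Fin.cons z (Fin.snoc (Fin.snoc k a) b) : Fin (q+4) → ι)
        = (CD k z a b (k (Fin.last q)) : Fin (q+4) → ι)
          ∘ liftPerm (Equiv.swap (Fin.castSucc (Fin.castSucc (Fin.last q)))
              (Fin.castSucc (Fin.last (q+1)))) := by
      rw [CD, cons_comp_liftPerm]
      rw [swap_eq k a b]
    have hdet : Matrix.det (Matrix.of fun i j : Fin (q+4) =>
          E (Rb μ z b i) ((Fin.cons z (Fin.snoc (Fin.snoc k a) b) : Fin (q+4) → ι) j))
        = -(Dm E μ k z a b (k (Fin.last q))) := by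
      rw [show (Matrix.of fun i j : Fin (q+4) =>
          E (Rb μ z b i) ((Fin.cons z (Fin.snoc (Fin.snoc k a) b) : Fin (q+4) → ι) j))
        = (Matrix.of fun r c : Fin (q+4) =>
            E (Rb μ z b r) (CD k z a b (k (Fin.last q)) c)).submatrix id
              (liftPerm (Equiv.swap (Fin.castSucc (Fin.castSucc (Fin.last q)))
                (Fin.castSucc (Fin.last (q+1)))))
        from by
          ext r c
          simp only [Matrix.submatrix_apply, Matrix.of_apply, id]
          rw [show (Fin.cons z (Fin.snoc (Fin.snoc k a) b) : Fin (q+4) → ι) c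
            = (CD k z a b (k (Fin.last q)) : Fin (q+4) → ι)
                (liftPerm (Equiv.swap (Fin.castSucc (Fin.castSucc (Fin.last q)))
                  (Fin.castSucc (Fin.last (q+1)))) c)
            from congrFun hcols c]]
      rw [Matrix.det_permute', sign_liftPerm,
        Equiv.Perm.sign_swap (Fin.ne_of_val_ne (by simp))]
      rw [Dm]
      push_cast
      ring
    rw [hdet]
    ring
  have hterm : (-1:ℝ)^(((Fin.succ (Fin.succ (Fin.castSucc (Fin.last q))) : Fin (q+4)) : ℕ) + 1)
        * Mi E k z st b (Fin.succ (Fin.succ (Fin.castSucc (Fin.last q))))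
        * Dm E μ k z a b (Tr k z st b (Fin.succ (Fin.succ (Fin.castSucc (Fin.last q)))))
      = Matrix.det (Matrix.of fun i j : Fin (q+4) =>
          E (Rb μ z b i) ((Fin.cons z (Fin.snoc (Fin.snoc k a) b) : Fin (q+4) → ι) j)) *
        Matrix.det (Matrix.of fun i j : Fin (q+3) =>
          E ((Fin.cons z (Fin.snoc (Fin.snoc (k ∘ Fin.castSucc) st) b) : Fin (q+3) → ι) i)
            (Ckb k z b j)) := by
    rw [hvq, hTrq, hMiq, hDq]
    have h1 : ((-1:ℝ)^q) * ((-1:ℝ)^q) = 1 := by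
      rw [← pow_add, ← two_mul, pow_mul]
      norm_num
    have h2 : (-1:ℝ)^(q+2+1) = -((-1:ℝ)^q) := by
      rw [show q+2+1 = q+3 from rfl, pow_add]
      norm_num
    rw [h2]
    linear_combination (Matrix.det (Matrix.of fun i j : Fin (q+4) =>
          E (Rb μ z b i) ((Fin.cons z (Fin.snoc (Fin.snoc k a) b) : Fin (q+4) → ι) j)) *
        Matrix.det (Matrix.of fun i j : Fin (q+3) =>
          E ((Fin.cons z (Fin.snoc (Fin.snoc (k ∘ Fin.castSucc) st) b) : Fin (q+3) → ι) i)
            (Ckb k z b j))) * h1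
  rw [hz0, hzlast, hterm, hTr1, hMi1,
    Finset.sum_congr rfl fun v _ => by rw [hzmid v]]
  have hv1 : ((Fin.succ (0 : Fin (q+3)) : Fin (q+4)) : ℕ) = 1 := rfl
  rw [hv1]
  simp only [Finset.sum_const_zero, mul_zero, zero_add, add_zero]
  norm_num
  ring

end Core


lemma ofFn_snoc {n : ℕ} (f : Fin n → α) (y : α) :
    List.ofFn (Fin.snoc f y) = List.ofFn f ++ [y] := by
  rw [List.ofFn_succ']
  simp [List.concat_eq_append]

lemma cmMinor_ofFn {m n : ℕ} (rsq : Fin m → ℝ) (ρsq : Fin m → Fin m → ℝ)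
    (R C : Fin n → CMIdx m) :
    cmMinor rsq ρsq (List.ofFn R) (List.ofFn C) =
      Matrix.det (Matrix.of fun i j : Fin n => cmEnt rsq ρsq (R i) (C j)) := by
  have h1 : (List.ofFn R).length = n := List.length_ofFn
  have h2 : (List.ofFn C).length = n := List.length_ofFn
  rw [cmMinor, dif_pos (h1.trans h2.symm)]
  rw [show (Matrix.of fun i j : Fin (List.ofFn R).length =>
      cmEnt rsq ρsq ((List.ofFn R).get i)
        ((List.ofFn C).get (Fin.cast (h1.trans h2.symm) j))) =
    (Matrix.of fun i j : Fin n => cmEnt rsq ρsq (R i) (C j)).submatrix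
      (finCongr h1) (finCongr h1) from ?_]
  · rw [Matrix.det_submatrix_equiv_self]
  · ext i j
    simp [List.get_ofFn]
    congr 1

lemma shapeA {n : ℕ} {β : Type*} (x y : β) (f : Fin n → β) :
    x :: List.ofFn f ++ [y] = List.ofFn (Fin.cons x (Fin.snoc f y)) := by
  rw [List.ofFn_cons, ofFn_snoc]
  simp

lemma shapeB {n : ℕ} {β : Type*} (x y₁ y₂ : β) (f : Fin n → β) :
    x :: List.ofFn f ++ [y₁, y₂] = List.ofFn (Fin.cons x (Fin.snoc (Fin.snoc f y₁) y₂)) := by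
  rw [List.ofFn_cons, ofFn_snoc, ofFn_snoc]
  simp

lemma shapeC {n : ℕ} {β : Type*} (x₁ x₂ y : β) (f : Fin n → β) :
    [x₁, x₂] ++ List.ofFn f ++ [y] = List.ofFn (Fin.cons x₁ (Fin.cons x₂ (Fin.snoc f y))) := by
  rw [List.ofFn_cons, List.ofFn_cons, ofFn_snoc]
  simp

lemma shapeD {n : ℕ} {β : Type*} (x y₁ y₂ y₃ : β) (f : Fin n → β) :
    x :: List.ofFn f ++ [y₁, y₂, y₃]
      = List.ofFn (Fin.cons x (Fin.snoc (Fin.snoc (Fin.snoc f y₁) y₂) y₃)) := by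
  rw [List.ofFn_cons, ofFn_snoc, ofFn_snoc, ofFn_snoc]
  simp

end CMAux

/-- Lemma 41 (identity (63)) of Aomoto–Machida, for arbitrary real Cayley–Menger data and
pairwise distinct indices `μ_1,…,μ_{p+1}, k_1,…,k_p, a, b`:
`Σ_{ν=1}^{p+1} (−1)^{p+1−ν} B(0 μ₁…μ̂_ν…μ_{p+1} b ; 0 K_{p−1} a b)
    · B(0 ⋆ K_p b ; 0 μ_ν K_p b)
 = B(0 μ₁…μ_{p+1} b ; 0 K_p a b) · B(0 K_{p−1} ⋆ b ; 0 K_p b)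
   + B(0 μ₁…μ_{p+1} b ; 0 K_{p−1} a ⋆ b) · B(0 K_p b)`. -/
theorem cm_laplace_identity (m p : ℕ) (hp : 1 ≤ p)
    (rsq : Fin m → ℝ) (ρsq : Fin m → Fin m → ℝ) (hsym : ∀ i j, ρsq i j = ρsq j i)
    (μ : Fin (p + 1) → Fin m) (kf : Fin p → Fin m) (a b : Fin m)
    (hμ : Function.Injective μ) (hkf : Function.Injective kf)
    (hμk : ∀ i j, μ i ≠ kf j) (hμa : ∀ i, μ i ≠ a) (hμb : ∀ i, μ i ≠ b)
    (hka : ∀ j, kf j ≠ a) (hkb : ∀ j, kf j ≠ b) (hab : a ≠ b) :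
    (∑ ν : Fin (p + 1),
      (-1 : ℝ) ^ (p - (ν : ℕ)) *
        cmMinor rsq ρsq
          (CMIdx.zero :: (List.ofFn fun t : Fin p => CMIdx.pt (μ (ν.succAbove t))) ++
            [CMIdx.pt b])
          (CMIdx.zero ::
            (List.ofFn fun t : Fin (p - 1) => CMIdx.pt (kf ⟨(t : ℕ), by omega⟩)) ++
            [CMIdx.pt a, CMIdx.pt b]) *
        cmMinor rsq ρsq
          ([CMIdx.zero, CMIdx.star] ++ (List.ofFn fun t => CMIdx.pt (kf t)) ++
            [CMIdx.pt b])
          ([CMIdx.zero, CMIdx.pt (μ ν)] ++ (List.ofFn fun t => CMIdx.pt (kf t)) ++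
            [CMIdx.pt b])) =
      cmMinor rsq ρsq
          (CMIdx.zero :: (List.ofFn fun t => CMIdx.pt (μ t)) ++ [CMIdx.pt b])
          (CMIdx.zero :: (List.ofFn fun t => CMIdx.pt (kf t)) ++
            [CMIdx.pt a, CMIdx.pt b]) *
        cmMinor rsq ρsq
          (CMIdx.zero ::
            (List.ofFn fun t : Fin (p - 1) => CMIdx.pt (kf ⟨(t : ℕ), by omega⟩)) ++
            [CMIdx.star, CMIdx.pt b])
          (CMIdx.zero :: (List.ofFn fun t => CMIdx.pt (kf t)) ++ [CMIdx.pt b]) +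
      cmMinor rsq ρsq
          (CMIdx.zero :: (List.ofFn fun t => CMIdx.pt (μ t)) ++ [CMIdx.pt b])
          (CMIdx.zero ::
            (List.ofFn fun t : Fin (p - 1) => CMIdx.pt (kf ⟨(t : ℕ), by omega⟩)) ++
            [CMIdx.pt a, CMIdx.star, CMIdx.pt b]) *
        cmMinor rsq ρsq
          (CMIdx.zero :: (List.ofFn fun t => CMIdx.pt (kf t)) ++ [CMIdx.pt b])
          (CMIdx.zero :: (List.ofFn fun t => CMIdx.pt (kf t)) ++ [CMIdx.pt b]) := by
  obtain ⟨q, rfl⟩ : ∃ q, p = q + 1 := ⟨p - 1, by omega⟩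
  have hsymE : ∀ x y, cmEnt rsq ρsq x y = cmEnt rsq ρsq y x := by
    intro x y
    cases x <;> cases y <;> simp [cmEnt]
    next i j =>
      rcases eq_or_ne i j with h | h
      · simp [h]
      · simp [h, Ne.symm h, hsym i j]
  simp only [CMAux.shapeA, CMAux.shapeB, CMAux.shapeC, CMAux.shapeD, CMAux.cmMinor_ofFn]
  exact CMAux.core (cmEnt rsq ρsq) (fun t => CMIdx.pt (μ t)) (fun t => CMIdx.pt (kf t))
    CMIdx.zero CMIdx.star (CMIdx.pt a) (CMIdx.pt b) hsymE
end

section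
/- Let P_1, …, P_m ∈ ℝ^n with ρ_{jk}^2 = ‖P_j − P_k‖^2, let r_1^2, …, r_m^2 be arbitrary reals, let L ⊆ {1, …, m} with |L| ≤ n, and let j, k, a ∈ {1, …, m} ∖ L be three distinct indices. Then B(0 a k L ; 0 j k L) · B(0 ⋆ L ; 0 k L) · B(0 j L) + B(0 a j L ; 0 k j L) · B(0 ⋆ L ; 0 j L) · B(0 k L) = B(0 ⋆ k L ; 0 j k L) · B(0 a L ; 0 k L) · B(0 j L) + B(0 ⋆ j L ; 0 k j L) · B(0 a L ; 0 j L) · B(0 k L); that is, the sum B(0 a k L ; 0 j k L) B(0 ⋆ L ; 0 k L)/B(0 k L) + B(0 a j L ; 0 k j L) B(0 ⋆ L ; 0 j L)/B(0 j L) is invariant under exchanging the symbols a and ⋆. -/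
open Matrix


section Master
variable {R S : Type} [CommRing R] [CommRing S] {o : Type} [Fintype o] [DecidableEq o]

def brd1 (K : Matrix o o R) (B : Matrix o (Fin 4) R) (C : Matrix (Fin 4) o R)
    (E : Matrix (Fin 4) (Fin 4) R) (x y : Fin 4) : Matrix (o ⊕ Fin 1) (o ⊕ Fin 1) R :=
  fromBlocks K (B.submatrix id fun _ => y) (C.submatrix (fun _ => x) id) (of fun _ _ => E x y)

def brd2 (K : Matrix o o R) (B : Matrix o (Fin 4) R) (C : Matrix (Fin 4) o R)
    (E : Matrix (Fin 4) (Fin 4) R) (x1 x2 y1 y2 : Fin 4) : Matrix (o ⊕ Fin 2) (o ⊕ Fin 2) R :=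
  fromBlocks K (B.submatrix id ![y1, y2]) (C.submatrix ![x1, x2] id)
    (E.submatrix ![x1, x2] ![y1, y2])

def cmExpr (K : Matrix o o R) (B : Matrix o (Fin 4) R) (C : Matrix (Fin 4) o R)
    (E : Matrix (Fin 4) (Fin 4) R) : R × R :=
  ((brd2 K B C E 1 3 2 3).det * (brd1 K B C E 0 3).det * (brd1 K B C E 2 2).det
      + (brd2 K B C E 1 2 3 2).det * (brd1 K B C E 0 2).det * (brd1 K B C E 3 3).det,
   (brd2 K B C E 0 3 2 3).det * (brd1 K B C E 1 3).det * (brd1 K B C E 2 2).det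
      + (brd2 K B C E 0 2 3 2).det * (brd1 K B C E 1 2).det * (brd1 K B C E 3 3).det)

set_option linter.unusedSectionVars false in
lemma brd1_map (f : R →+* S) (K : Matrix o o R) (B : Matrix o (Fin 4) R) (C : Matrix (Fin 4) o R)
    (E : Matrix (Fin 4) (Fin 4) R) (x y : Fin 4) :
    brd1 (K.map f) (B.map f) (C.map f) (E.map f) x y = (brd1 K B C E x y).map f := by
  ext i j
  cases i <;> cases j <;> simp [brd1, fromBlocks, Matrix.map_apply]

set_option linter.unusedSectionVars false in
lemma brd2_map (f : R →+* S) (K : Matrix o o R) (B : Matrix o (Fin 4) R) (C : Matrix (Fin 4) o R)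
    (E : Matrix (Fin 4) (Fin 4) R) (x1 x2 y1 y2 : Fin 4) :
    brd2 (K.map f) (B.map f) (C.map f) (E.map f) x1 x2 y1 y2 = (brd2 K B C E x1 x2 y1 y2).map f := by
  ext i j
  rcases i with i | i <;> rcases j with j | j <;> (try fin_cases i) <;> (try fin_cases j) <;>
    simp [brd2, fromBlocks, Matrix.map_apply]

lemma cmExpr_map (f : R →+* S) (K : Matrix o o R) (B : Matrix o (Fin 4) R) (C : Matrix (Fin 4) o R)
    (E : Matrix (Fin 4) (Fin 4) R) :
    cmExpr (K.map f) (B.map f) (C.map f) (E.map f)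
      = (f (cmExpr K B C E).1, f (cmExpr K B C E).2) := by
  simp only [cmExpr, brd1_map, brd2_map, RingHom.map_det, RingHom.mapMatrix_apply, map_add,
    _root_.map_mul]

theorem master (K : Matrix o o R) (B : Matrix o (Fin 4) R) (C : Matrix (Fin 4) o R)
    (E : Matrix (Fin 4) (Fin 4) R) [Invertible K] :
    (cmExpr K B C E).1 = (cmExpr K B C E).2 := by
  have hc : ∀ x y, (brd1 K B C E x y).det = K.det * (E - C * K⁻¹ * B) x y := by
    intro x y
    rw [brd1, det_fromBlocks₁₁]
    congr 1
    rw [det_fin_one]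
    simp [Matrix.mul_apply, Matrix.sub_apply]
  have hd : ∀ x1 x2 y1 y2, (brd2 K B C E x1 x2 y1 y2).det
      = K.det * ((E - C * K⁻¹ * B) x1 y1 * (E - C * K⁻¹ * B) x2 y2
          - (E - C * K⁻¹ * B) x1 y2 * (E - C * K⁻¹ * B) x2 y1) := by
    intro x1 x2 y1 y2
    rw [brd2, det_fromBlocks₁₁]
    congr 1
    rw [det_fin_two]
    simp only [Matrix.sub_apply, Matrix.mul_apply]
    simp [Matrix.mul_apply, Matrix.sub_apply]
  simp only [cmExpr, hc, hd]
  ring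

theorem master_real (K : Matrix o o ℝ) (B : Matrix o (Fin 4) ℝ) (C : Matrix (Fin 4) o ℝ)
    (E : Matrix (Fin 4) (Fin 4) ℝ) :
    (cmExpr K B C E).1 = (cmExpr K B C E).2 := by
  classical
  set ψ : Polynomial ℝ →+* FractionRing (Polynomial ℝ) :=
    algebraMap (Polynomial ℝ) (FractionRing (Polynomial ℝ)) with hψ
  set KR : Matrix o o (Polynomial ℝ) :=
    (Polynomial.X : Polynomial ℝ) • (1 : Matrix o o (Polynomial ℝ)) + K.map Polynomial.C
    with hKRdef
  have hKR : KR.det = (-K).charpoly := by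
    rw [Matrix.charpoly]
    congr 1
    ext i j
    by_cases h : i = j
    · subst h
      simp only [hKRdef, Matrix.add_apply, Matrix.smul_apply, Matrix.one_apply_eq, smul_eq_mul,
        mul_one, Matrix.map_apply, charmatrix_apply_eq, Matrix.neg_apply, map_neg,
        sub_neg_eq_add]
    · simp [hKRdef, charmatrix_apply_ne _ _ _ h, Matrix.one_apply_ne h, smul_eq_mul,
        Matrix.smul_apply]
  have hKRne : KR.det ≠ 0 := by
    rw [hKR]; exact ((-K).charpoly_monic).ne_zero
  have hinj : Function.Injective ψ :=
    IsFractionRing.injective (Polynomial ℝ) (FractionRing (Polynomial ℝ))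
  haveI : Invertible (KR.map ψ) := by
    apply Matrix.invertibleOfIsUnitDet
    have : (KR.map ψ).det = ψ KR.det := by rw [RingHom.map_det]; rfl
    rw [this]
    exact isUnit_iff_ne_zero.mpr fun h => hKRne (hinj (by simpa using h))
  -- the identity over the fraction field, from `master`
  have h1 := master (KR.map ψ) ((B.map Polynomial.C).map ψ) ((C.map Polynomial.C).map ψ)
    ((E.map Polynomial.C).map ψ)
  have h2 := cmExpr_map ψ KR (B.map Polynomial.C) (C.map Polynomial.C) (E.map Polynomial.C)
  -- pull back to the polynomial ring
  have h3 : (cmExpr KR (B.map Polynomial.C) (C.map Polynomial.C) (E.map Polynomial.C)).1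
      = (cmExpr KR (B.map Polynomial.C) (C.map Polynomial.C) (E.map Polynomial.C)).2 := by
    apply hinj
    have e1 := congrArg Prod.fst h2
    have e2 := congrArg Prod.snd h2
    dsimp at e1 e2
    rw [← e1, ← e2]
    exact h1
  -- evaluate at 0
  have h4 := cmExpr_map (Polynomial.evalRingHom (0 : ℝ)) KR (B.map Polynomial.C)
    (C.map Polynomial.C) (E.map Polynomial.C)
  have hK0 : KR.map (Polynomial.evalRingHom (0 : ℝ)) = K := by
    ext i j
    simp only [hKRdef, Matrix.map_apply, Matrix.add_apply, Matrix.smul_apply, smul_eq_mul,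
      Matrix.one_apply, mul_ite, mul_one, mul_zero, Polynomial.coe_evalRingHom,
      Polynomial.eval_add, Polynomial.eval_C]
    split <;> simp
  have hC0 : ∀ {a b : Type} [Fintype a] [Fintype b] (M : Matrix a b ℝ),
      (M.map Polynomial.C).map (Polynomial.evalRingHom (0 : ℝ)) = M := by
    intro a b _ _ M
    ext i j; simp [Matrix.map_apply]
  rw [hK0, hC0, hC0, hC0] at h4
  have e1 := congrArg Prod.fst h4
  have e2 := congrArg Prod.snd h4
  dsimp at e1 e2
  rw [e1, e2, h3]

end Master

lemma cmMinor_ofFn_s17 {m N : ℕ} (rsq : Fin m → ℝ) (ρsq : Fin m → Fin m → ℝ)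
    (r c : Fin N → CMIdx m) :
    cmMinor rsq ρsq (List.ofFn r) (List.ofFn c)
      = Matrix.det (Matrix.of fun i j : Fin N => cmEnt rsq ρsq (r i) (c j)) := by
  have h : (List.ofFn r).length = (List.ofFn c).length := by simp
  rw [cmMinor, dif_pos h]
  rw [← Matrix.det_submatrix_equiv_self
    (finCongr (List.length_ofFn (f := r)) : Fin (List.ofFn r).length ≃ Fin N)]
  congr 1
  ext i j
  simp [Matrix.submatrix_apply, List.get_ofFn]
  rfl



def eqv2 (ℓ : ℕ) : (Fin 1 ⊕ Fin ℓ) ⊕ Fin 1 ≃ Fin (2 + ℓ) :=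
  (Equiv.sumAssoc (Fin 1) (Fin ℓ) (Fin 1)).trans <|
  (Equiv.sumCongr (Equiv.refl (Fin 1)) (Equiv.sumComm (Fin ℓ) (Fin 1))).trans <|
  ((Equiv.sumAssoc (Fin 1) (Fin 1) (Fin ℓ)).symm).trans <|
  (Equiv.sumCongr finSumFinEquiv (Equiv.refl (Fin ℓ))).trans finSumFinEquiv

def eqv3 (ℓ : ℕ) : (Fin 1 ⊕ Fin ℓ) ⊕ Fin 2 ≃ Fin (3 + ℓ) :=
  (Equiv.sumAssoc (Fin 1) (Fin ℓ) (Fin 2)).trans <|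
  (Equiv.sumCongr (Equiv.refl (Fin 1)) (Equiv.sumComm (Fin ℓ) (Fin 2))).trans <|
  ((Equiv.sumAssoc (Fin 1) (Fin 2) (Fin ℓ)).symm).trans <|
  (Equiv.sumCongr finSumFinEquiv (Equiv.refl (Fin ℓ))).trans finSumFinEquiv

lemma vec2_castAdd {α : Type*} (w w' : α) : ![w, w'] (Fin.castAdd 1 (0 : Fin 1)) = w := rfl
lemma vec2_natAdd {α : Type*} (w w' : α) : ![w, w'] (Fin.natAdd 1 (0 : Fin 1)) = w' := rfl
lemma vec3_castAdd {α : Type*} (w u u' : α) : ![w, u, u'] (Fin.castAdd 2 (0 : Fin 1)) = w := rfl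
lemma vec3_natAdd {α : Type*} (w u u' : α) (t : Fin 2) :
    ![w, u, u'] (Fin.natAdd 1 t) = ![u, u'] t := by
  have : Fin.natAdd 1 t = Fin.succ t := by ext; simp [Nat.add_comm]
  rw [this, Matrix.cons_val_succ]

lemma sv2l {α : Type*} (z u : α) :
    ![z, u] ((finSumFinEquiv : Fin 1 ⊕ Fin 1 ≃ Fin (1+1)) (Sum.inl 0)) = z := rfl
lemma sv2r {α : Type*} (z u : α) :
    ![z, u] ((finSumFinEquiv : Fin 1 ⊕ Fin 1 ≃ Fin (1+1)) (Sum.inr 0)) = u := rfl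
lemma sv3l {α : Type*} (z u u' : α) :
    ![z, u, u'] ((finSumFinEquiv : Fin 1 ⊕ Fin 2 ≃ Fin (1+2)) (Sum.inl 0)) = z := rfl
lemma sv3r {α : Type*} (z u u' : α) (t : Fin 2) :
    ![z, u, u'] ((finSumFinEquiv : Fin 1 ⊕ Fin 2 ≃ Fin (1+2)) (Sum.inr t)) = ![u, u'] t := by
  rw [finSumFinEquiv_apply_right]
  exact vec3_natAdd z u u' t


lemma bridge1 {m ℓ : ℕ} (rsq : Fin m → ℝ) (ρsq : Fin m → Fin m → ℝ)
    (z u v : CMIdx m) (g : Fin ℓ → CMIdx m) :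
    cmMinor rsq ρsq ([z, u] ++ List.ofFn g) ([z, v] ++ List.ofFn g)
      = Matrix.det (Matrix.of fun i j : (Fin 1 ⊕ Fin ℓ) ⊕ Fin 1 =>
          cmEnt rsq ρsq (Sum.elim (Sum.elim (fun _ => z) g) (fun _ => u) i)
                        (Sum.elim (Sum.elim (fun _ => z) g) (fun _ => v) j)) := by
  have h2 : ∀ w : CMIdx m, [z, w] ++ List.ofFn g = List.ofFn (Fin.append ![z, w] g) := by
    intro w; rw [List.ofFn_fin_append]; simp [List.ofFn_succ]
  rw [h2 u, h2 v, cmMinor_ofFn_s17]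
  rw [← Matrix.det_submatrix_equiv_self (eqv2 ℓ)]
  congr 1
  ext i j
  rcases i with (i | i) | i <;> rcases j with (j | j) | j <;>
    simp [eqv2, Fin.append_left, Fin.append_right, Fin.fin_one_eq_zero, finSumFinEquiv_apply_left, finSumFinEquiv_apply_right,
      sv2l, sv2r, Matrix.submatrix_apply]

lemma bridge2 {m ℓ : ℕ} (rsq : Fin m → ℝ) (ρsq : Fin m → Fin m → ℝ)
    (z u1 u2 v1 v2 : CMIdx m) (g : Fin ℓ → CMIdx m) :
    cmMinor rsq ρsq ([z, u1, u2] ++ List.ofFn g) ([z, v1, v2] ++ List.ofFn g)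
      = Matrix.det (Matrix.of fun i j : (Fin 1 ⊕ Fin ℓ) ⊕ Fin 2 =>
          cmEnt rsq ρsq (Sum.elim (Sum.elim (fun _ => z) g) ![u1, u2] i)
                        (Sum.elim (Sum.elim (fun _ => z) g) ![v1, v2] j)) := by
  have h2 : ∀ w w' : CMIdx m,
      [z, w, w'] ++ List.ofFn g = List.ofFn (Fin.append ![z, w, w'] g) := by
    intro w w'; rw [List.ofFn_fin_append]; simp [List.ofFn_succ]
  rw [h2 u1 u2, h2 v1 v2, cmMinor_ofFn_s17]
  rw [← Matrix.det_submatrix_equiv_self (eqv3 ℓ)]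
  congr 1
  ext i j
  rcases i with (i | i) | i <;> rcases j with (j | j) | j <;>
    simp [eqv3, Fin.append_left, Fin.append_right, Fin.fin_one_eq_zero, finSumFinEquiv_apply_left, finSumFinEquiv_apply_right,
      sv3l, sv3r, Matrix.submatrix_apply]


/-- Lemma 42 (identity (64)) of Aomoto–Machida, in cross-multiplied form: with `ρ` coming
from points `P_1,…,P_m ∈ ℝⁿ`, `r²` arbitrary, an increasing `L` with `|L| ≤ n`, and
distinct `j, k, a ∉ L`:
`B(0akL;0jkL)·B(0⋆L;0kL)·B(0jL) + B(0ajL;0kjL)·B(0⋆L;0jL)·B(0kL)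
 = B(0⋆kL;0jkL)·B(0aL;0kL)·B(0jL) + B(0⋆jL;0kjL)·B(0aL;0jL)·B(0kL)`,
i.e. the sum is invariant under exchanging the symbols `a` and `⋆`. -/
theorem cm_star_exchange_identity (n m ℓ : ℕ) (hℓ : ℓ ≤ n)
    (P : Fin m → EuclideanSpace ℝ (Fin n)) (rsq : Fin m → ℝ)
    (L : Fin ℓ → Fin m) (hL : StrictMono L)
    (j k a : Fin m) (hjk : j ≠ k) (hja : j ≠ a) (hka : k ≠ a)
    (hLj : ∀ t, L t ≠ j) (hLk : ∀ t, L t ≠ k) (hLa : ∀ t, L t ≠ a) :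
    cmMinor rsq (fun x y => ‖P x - P y‖ ^ 2)
          ([CMIdx.zero, CMIdx.pt a, CMIdx.pt k] ++ List.ofFn fun t => CMIdx.pt (L t))
          ([CMIdx.zero, CMIdx.pt j, CMIdx.pt k] ++ List.ofFn fun t => CMIdx.pt (L t)) *
        cmMinor rsq (fun x y => ‖P x - P y‖ ^ 2)
          ([CMIdx.zero, CMIdx.star] ++ List.ofFn fun t => CMIdx.pt (L t))
          ([CMIdx.zero, CMIdx.pt k] ++ List.ofFn fun t => CMIdx.pt (L t)) *
        cmMinor rsq (fun x y => ‖P x - P y‖ ^ 2)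
          ([CMIdx.zero, CMIdx.pt j] ++ List.ofFn fun t => CMIdx.pt (L t))
          ([CMIdx.zero, CMIdx.pt j] ++ List.ofFn fun t => CMIdx.pt (L t)) +
      cmMinor rsq (fun x y => ‖P x - P y‖ ^ 2)
          ([CMIdx.zero, CMIdx.pt a, CMIdx.pt j] ++ List.ofFn fun t => CMIdx.pt (L t))
          ([CMIdx.zero, CMIdx.pt k, CMIdx.pt j] ++ List.ofFn fun t => CMIdx.pt (L t)) *
        cmMinor rsq (fun x y => ‖P x - P y‖ ^ 2)
          ([CMIdx.zero, CMIdx.star] ++ List.ofFn fun t => CMIdx.pt (L t))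
          ([CMIdx.zero, CMIdx.pt j] ++ List.ofFn fun t => CMIdx.pt (L t)) *
        cmMinor rsq (fun x y => ‖P x - P y‖ ^ 2)
          ([CMIdx.zero, CMIdx.pt k] ++ List.ofFn fun t => CMIdx.pt (L t))
          ([CMIdx.zero, CMIdx.pt k] ++ List.ofFn fun t => CMIdx.pt (L t)) =
    cmMinor rsq (fun x y => ‖P x - P y‖ ^ 2)
          ([CMIdx.zero, CMIdx.star, CMIdx.pt k] ++ List.ofFn fun t => CMIdx.pt (L t))
          ([CMIdx.zero, CMIdx.pt j, CMIdx.pt k] ++ List.ofFn fun t => CMIdx.pt (L t)) *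
        cmMinor rsq (fun x y => ‖P x - P y‖ ^ 2)
          ([CMIdx.zero, CMIdx.pt a] ++ List.ofFn fun t => CMIdx.pt (L t))
          ([CMIdx.zero, CMIdx.pt k] ++ List.ofFn fun t => CMIdx.pt (L t)) *
        cmMinor rsq (fun x y => ‖P x - P y‖ ^ 2)
          ([CMIdx.zero, CMIdx.pt j] ++ List.ofFn fun t => CMIdx.pt (L t))
          ([CMIdx.zero, CMIdx.pt j] ++ List.ofFn fun t => CMIdx.pt (L t)) +
      cmMinor rsq (fun x y => ‖P x - P y‖ ^ 2)
          ([CMIdx.zero, CMIdx.star, CMIdx.pt j] ++ List.ofFn fun t => CMIdx.pt (L t))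
          ([CMIdx.zero, CMIdx.pt k, CMIdx.pt j] ++ List.ofFn fun t => CMIdx.pt (L t)) *
        cmMinor rsq (fun x y => ‖P x - P y‖ ^ 2)
          ([CMIdx.zero, CMIdx.pt a] ++ List.ofFn fun t => CMIdx.pt (L t))
          ([CMIdx.zero, CMIdx.pt j] ++ List.ofFn fun t => CMIdx.pt (L t)) *
        cmMinor rsq (fun x y => ‖P x - P y‖ ^ 2)
          ([CMIdx.zero, CMIdx.pt k] ++ List.ofFn fun t => CMIdx.pt (L t))
          ([CMIdx.zero, CMIdx.pt k] ++ List.ofFn fun t => CMIdx.pt (L t)) := by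
  classical
  set g : Fin ℓ → CMIdx m := fun t => CMIdx.pt (L t) with hg
  set b : CMIdx m → CMIdx m → ℝ := cmEnt rsq (fun x y => ‖P x - P y‖ ^ 2) with hb
  set p : Fin 1 ⊕ Fin ℓ → CMIdx m := Sum.elim (fun _ => CMIdx.zero) g with hp
  set ex : Fin 4 → CMIdx m := ![CMIdx.star, CMIdx.pt a, CMIdx.pt j, CMIdx.pt k] with hex
  set K : Matrix (Fin 1 ⊕ Fin ℓ) (Fin 1 ⊕ Fin ℓ) ℝ := Matrix.of fun i j => b (p i) (p j) with hK
  set Bm : Matrix (Fin 1 ⊕ Fin ℓ) (Fin 4) ℝ := Matrix.of fun i y => b (p i) (ex y) with hBm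
  set Cm : Matrix (Fin 4) (Fin 1 ⊕ Fin ℓ) ℝ := Matrix.of fun x i => b (ex x) (p i) with hCm
  set Em : Matrix (Fin 4) (Fin 4) ℝ := Matrix.of fun x y => b (ex x) (ex y) with hEm
  have h1 : ∀ x y : Fin 4,
      cmMinor rsq (fun x y => ‖P x - P y‖ ^ 2)
          ([CMIdx.zero, ex x] ++ List.ofFn g) ([CMIdx.zero, ex y] ++ List.ofFn g)
        = (brd1 K Bm Cm Em x y).det := by
    intro x y
    rw [bridge1]
    congr 1
    ext i i'
    rcases i with i | i <;> rcases i' with i' | i' <;>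
      (try rcases i with i | i) <;> (try rcases i' with i' | i') <;>
      simp [brd1, Matrix.fromBlocks, hK, hBm, hCm, hEm, hb, hp]
  have h2 : ∀ x1 x2 y1 y2 : Fin 4,
      cmMinor rsq (fun x y => ‖P x - P y‖ ^ 2)
          ([CMIdx.zero, ex x1, ex x2] ++ List.ofFn g)
          ([CMIdx.zero, ex y1, ex y2] ++ List.ofFn g)
        = (brd2 K Bm Cm Em x1 x2 y1 y2).det := by
    intro x1 x2 y1 y2
    rw [bridge2]
    congr 1
    ext i i'
    rcases i with i | i <;> rcases i' with i' | i' <;>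
      (try rcases i with i | i) <;> (try rcases i' with i' | i') <;>
      (try obtain rfl : (i : ℕ) = 0 := by omega) <;> (try obtain rfl : (i' : ℕ) = 0 := by omega) <;>
      simp [brd2, Matrix.fromBlocks, hK, hBm, hCm, hEm, hb, hp]
  have hstar : CMIdx.star = ex 0 := by simp [hex]
  have ha : CMIdx.pt a = ex 1 := by simp [hex]
  have hj : CMIdx.pt j = ex 2 := by simp [hex]
  have hk : CMIdx.pt k = ex 3 := by simp [hex]
  rw [show (List.ofFn fun t => CMIdx.pt (L t)) = List.ofFn g from rfl]
  rw [hstar, ha, hj, hk, h1 0 3, h1 2 2, h1 0 2, h1 3 3, h1 1 3, h1 1 2,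
    h2 1 3 2 3, h2 1 2 3 2, h2 0 3 2 3, h2 0 2 3 2]
  exact master_real K Bm Cm Em
end

section
/- Dimension n = 1: for 1 ≤ i ≤ m let f_i(x) = x^2 + 2α_{i1}x + α_{i0} with α_{i1}, α_{i0} ∈ ℝ, put r_i^2 = α_{i1}^2 − α_{i0}, the signed distance ρ_{ik} = α_{i1} − α_{k1}, and ρ_{ik}^2 its square. For distinct indices j, k, l define Δ_{jkl} = det [[1, 1, 1], [α_{j0}, α_{k0}, α_{l0}], [α_{j1}, α_{k1}, α_{l1}]]. Then: (i) B(0 ⋆ k l ; 0 j k l) = −2 ρ_{kl} Δ_{jkl}; (ii) B(0 ⋆ j k l) = −2 Δ_{jkl}^2; and (iii) Δ_{jkl} = ρ_{jk} ρ_{jl} ρ_{kl} − ρ_{kl} r_j^2 + ρ_{jl} r_k^2 − ρ_{jk} r_l^2. -/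
set_option maxHeartbeats 2000000


/-- Dimension `n = 1`: for three quadrics `f_i(x) = x² + 2α_{i1}x + α_{i0}` with
`r_i² = α_{i1}² − α_{i0}`, signed distances `ρ_{ik} = α_{i1} − α_{k1}`, and
`Δ_{jkl} = det [[1,1,1],[α_{j0},α_{k0},α_{l0}],[α_{j1},α_{k1},α_{l1}]]`, one has
(i) `B(0⋆kl ; 0jkl) = −2 ρ_{kl} Δ_{jkl}`, (ii) `B(0⋆jkl) = −2 Δ_{jkl}²`, and
(iii) `Δ_{jkl} = ρ_{jk} ρ_{jl} ρ_{kl} − ρ_{kl} r_j² + ρ_{jl} r_k² − ρ_{jk} r_l²`. -/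
theorem cm_dim_one_cayley_menger (αj1 αj0 αk1 αk0 αl1 αl0 : ℝ) :
    (Matrix.det !![(0 : ℝ), 1, 1, 1;
                   1, αj1 ^ 2 - αj0, αk1 ^ 2 - αk0, αl1 ^ 2 - αl0;
                   1, (αj1 - αk1) ^ 2, 0, (αk1 - αl1) ^ 2;
                   1, (αj1 - αl1) ^ 2, (αk1 - αl1) ^ 2, 0] =
      -2 * (αk1 - αl1) * Matrix.det !![(1 : ℝ), 1, 1; αj0, αk0, αl0; αj1, αk1, αl1]) ∧
    (Matrix.det !![(0 : ℝ), 1, 1, 1, 1;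
                   1, 0, αj1 ^ 2 - αj0, αk1 ^ 2 - αk0, αl1 ^ 2 - αl0;
                   1, αj1 ^ 2 - αj0, 0, (αj1 - αk1) ^ 2, (αj1 - αl1) ^ 2;
                   1, αk1 ^ 2 - αk0, (αj1 - αk1) ^ 2, 0, (αk1 - αl1) ^ 2;
                   1, αl1 ^ 2 - αl0, (αj1 - αl1) ^ 2, (αk1 - αl1) ^ 2, 0] =
      -2 * (Matrix.det !![(1 : ℝ), 1, 1; αj0, αk0, αl0; αj1, αk1, αl1]) ^ 2) ∧
    (Matrix.det !![(1 : ℝ), 1, 1; αj0, αk0, αl0; αj1, αk1, αl1] =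
      (αj1 - αk1) * (αj1 - αl1) * (αk1 - αl1)
        - (αk1 - αl1) * (αj1 ^ 2 - αj0) + (αj1 - αl1) * (αk1 ^ 2 - αk0)
        - (αj1 - αk1) * (αl1 ^ 2 - αl0)) := by
  refine ⟨?_, ?_, ?_⟩ <;>
    simp [Matrix.det_succ_row_zero, Matrix.det_fin_three, Fin.sum_univ_succ, Fin.succAbove,
      Fin.castSucc, Fin.castAdd, Fin.castLE] <;> ring
end
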